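/- arXiv:0903.5436 — 19 statements merged into one kernel-verified Lean document; each statement's English description precedes it below -/
import Mathlib

section
/- Let Q be a quasigroup and let R be a right zero semigroup (in the language {·, \, /}). Equip the direct product Q × R with componentwise operations ·, \, /. Then Q × R satisfies all five identities of system (A): (A1) x \ (x·y) = y; (A2) x·(x \ y) = y; (A3) (x/y)·y = (x·y)/y; (A4) ((x/y)·y)/z = x/z; (A5) ((x·y)/z)·z = x·((y/z)·z). -/
/-- The direct product of a quasigroup and a right zero semigroup
(with componentwise operations) satisfies all five identities of system (A). -/
theorem rightProduct_satisfies_systemA {Q R : Type*}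
    (mQ lQ rQ : Q → Q → Q)
    (hQ1 : ∀ x y, lQ x (mQ x y) = y)
    (hQ2 : ∀ x y, mQ x (lQ x y) = y)
    (hQ3 : ∀ x y, rQ (mQ x y) y = x)
    (hQ4 : ∀ x y, mQ (rQ x y) y = x)
    (mR lR rR : R → R → R)
    (hRm : ∀ x y, mR x y = y)
    (hRl : ∀ x y, lR x y = y)
    (hRr : ∀ x y, rR x y = y)
    (mul ld rd : Q × R → Q × R → Q × R)
    (hmul : ∀ a b, mul a b = (mQ a.1 b.1, mR a.2 b.2))
    (hld : ∀ a b, ld a b = (lQ a.1 b.1, lR a.2 b.2))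
    (hrd : ∀ a b, rd a b = (rQ a.1 b.1, rR a.2 b.2)) :
    (∀ x y, ld x (mul x y) = y) ∧
    (∀ x y, mul x (ld x y) = y) ∧
    (∀ x y, mul (rd x y) y = rd (mul x y) y) ∧
    (∀ x y z, rd (mul (rd x y) y) z = rd x z) ∧
    (∀ x y z, mul (rd (mul x y) z) z = mul x (mul (rd y z) z)) := by
  refine ⟨fun x y => ?_, fun x y => ?_, fun x y => ?_, fun x y z => ?_, fun x y z => ?_⟩ <;>
    simp [hmul, hld, hrd, hQ1, hQ2, hQ3, hQ4, hRm, hRl, hRr]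
end

section
/- Let (S; ·, \, /) be an algebra satisfying system (A), and define x ⋆ y := (x·y)/y. Then for all x, y, z in S: (x·y) ⋆ z = x·(y ⋆ z), (x \ y) ⋆ z = x \ (y ⋆ z), and (x/y) ⋆ z = x/(y ⋆ z). -/
/-- The star operation `x ⋆ y := (x·y)/y`. -/
def star {S : Type*} (mul rd : S → S → S) (x y : S) : S := rd (mul x y) y

/-- In an algebra satisfying system (A), with `x ⋆ y := (x·y)/y`,
we have `(x·y) ⋆ z = x·(y ⋆ z)`, `(x\y) ⋆ z = x\(y ⋆ z)` and `(x/y) ⋆ z = x/(y ⋆ z)`. -/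
theorem star_translations {S : Type*} (mul ld rd : S → S → S)
    (A1 : ∀ x y : S, ld x (mul x y) = y)
    (A2 : ∀ x y : S, mul x (ld x y) = y)
    (A3 : ∀ x y : S, mul (rd x y) y = rd (mul x y) y)
    (A4 : ∀ x y z : S, rd (mul (rd x y) y) z = rd x z)
    (A5 : ∀ x y z : S, mul (rd (mul x y) z) z = mul x (mul (rd y z) z)) :
    ∀ x y z : S,
      star mul rd (mul x y) z = mul x (star mul rd y z) ∧
      star mul rd (ld x y) z = ld x (star mul rd y z) ∧
      star mul rd (rd x y) z = rd x (star mul rd y z) := by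
  -- star a b = mul (rd a b) b
  have hstar : ∀ a b : S, star mul rd a b = mul (rd a b) b := fun a b => (A3 a b).symm
  -- F2 : rd (star a b) c = rd a c
  have F2 : ∀ a b c : S, rd (star mul rd a b) c = rd a c := by
    intro a b c; rw [hstar]; exact A4 a b c
  -- Part 1
  have P1 : ∀ x y z : S, star mul rd (mul x y) z = mul x (star mul rd y z) := by
    intro x y z
    show rd (mul (mul x y) z) z = mul x (star mul rd y z)
    rw [← A3, A5, hstar]
  -- Part 2
  have P2 : ∀ x y z : S, star mul rd (ld x y) z = ld x (star mul rd y z) := by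
    intro x y z
    conv_lhs => rw [← A1 x (star mul rd (ld x y) z)]
    rw [← P1, A2]
  -- star (star y z) z = star y z
  have hBz : ∀ y z : S, star mul rd (star mul rd y z) z = star mul rd y z := by
    intro y z
    rw [hstar (star mul rd y z) z, F2, ← hstar]
  -- L : star a (star y z) = star a z
  have L : ∀ a y z : S, star mul rd a (star mul rd y z) = star mul rd a z := by
    intro a y z
    calc star mul rd a (star mul rd y z)
        = mul (rd a (star mul rd y z)) (star mul rd y z) := hstar _ _
      _ = mul (rd a (star mul rd y z)) (mul (rd (star mul rd y z) z) z) := by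
          rw [show mul (rd (star mul rd y z) z) z = star mul rd y z from by
            rw [← hstar, hBz]]
      _ = mul (rd (mul (rd a (star mul rd y z)) (star mul rd y z)) z) z :=
          (A5 (rd a (star mul rd y z)) (star mul rd y z) z).symm
      _ = mul (rd (star mul rd a (star mul rd y z)) z) z := by rw [← hstar a (star mul rd y z)]
      _ = mul (rd a z) z := by rw [F2]
      _ = star mul rd a z := (hstar a z).symm
  -- Part 3
  have P3 : ∀ x y z : S, star mul rd (rd x y) z = rd x (star mul rd y z) := by
    intro x y z
    have hm : mul (rd x y) (star mul rd y z) = star mul rd x z := by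
      rw [hstar y z, ← A5, ← hstar x y, F2, ← hstar]
    calc star mul rd (rd x y) z
        = star mul rd (rd x y) (star mul rd y z) := (L (rd x y) y z).symm
      _ = rd (mul (rd x y) (star mul rd y z)) (star mul rd y z) := rfl
      _ = rd (star mul rd x z) (star mul rd y z) := by rw [hm]
      _ = rd x (star mul rd y z) := F2 x z _
  exact fun x y z => ⟨P1 x y z, P2 x y z, P3 x y z⟩
end

section
/- Let (S; ·, \, /) be an algebra satisfying system (A), and define x ⋆ y := (x·y)/y. Then (S; ⋆) is a rectangular band: for all x, y, z in S, x ⋆ x = x, (x ⋆ y) ⋆ z = x ⋆ z, and x ⋆ (y ⋆ z) = x ⋆ z (in particular ⋆ is associative). -/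
/-- In an algebra satisfying system (A), `(S; ⋆)` is a rectangular band:
`x ⋆ x = x`, `(x ⋆ y) ⋆ z = x ⋆ z` and `x ⋆ (y ⋆ z) = x ⋆ z`. -/
theorem star_rectangular_band {S : Type*} (mul ld rd : S → S → S)
    (A1 : ∀ x y : S, ld x (mul x y) = y)
    (A2 : ∀ x y : S, mul x (ld x y) = y)
    (A3 : ∀ x y : S, mul (rd x y) y = rd (mul x y) y)
    (A4 : ∀ x y z : S, rd (mul (rd x y) y) z = rd x z)
    (A5 : ∀ x y z : S, mul (rd (mul x y) z) z = mul x (mul (rd y z) z)) :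
    (∀ x : S, star mul rd x x = x) ∧
    (∀ x y z : S, star mul rd (star mul rd x y) z = star mul rd x z) ∧
    (∀ x y z : S, star mul rd x (star mul rd y z) = star mul rd x z) := by
  -- F3 : (x·y) ⋆ z = x · (y ⋆ z)
  have F3 : ∀ x y z : S, star mul rd (mul x y) z = mul x (star mul rd y z) := by
    intro x y z
    calc star mul rd (mul x y) z = rd (mul (mul x y) z) z := rfl
      _ = mul (rd (mul x y) z) z := (A3 _ _).symm
      _ = mul x (mul (rd y z) z) := A5 _ _ _
      _ = mul x (rd (mul y z) z) := by rw [A3]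
      _ = mul x (star mul rd y z) := rfl
  -- F4 : (x ⋆ y) ⋆ z = x ⋆ z
  have F4 : ∀ x y z : S, star mul rd (star mul rd x y) z = star mul rd x z := by
    intro x y z
    calc star mul rd (star mul rd x y) z
        = rd (mul (star mul rd x y) z) z := rfl
      _ = mul (rd (star mul rd x y) z) z := (A3 _ _).symm
      _ = mul (rd (mul (rd x y) y) z) z := by
            rw [show star mul rd x y = mul (rd x y) y from (A3 x y).symm]
      _ = mul (rd x z) z := by rw [A4]
      _ = rd (mul x z) z := A3 _ _
      _ = star mul rd x z := rfl
  -- idempotence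
  have idem : ∀ x : S, star mul rd x x = x := by
    intro x
    have h1 : mul (rd x x) x = star mul rd x x := A3 x x
    have h2 : mul (rd x x) (star mul rd x x) = star mul rd x x := by
      have h := F3 (rd x x) x x
      rw [h1, F4] at h
      exact h.symm
    calc star mul rd x x
        = ld (rd x x) (mul (rd x x) (star mul rd x x)) := (A1 _ _).symm
      _ = ld (rd x x) (mul (rd x x) x) := by rw [h2, h1]
      _ = x := A1 _ _
  refine ⟨idem, fun x y z => F4 x y z, ?_⟩
  intro x y z
  set w := star mul rd y z with hw
  have key : star mul rd x w = star mul rd (mul (rd x w) y) z := by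
    calc star mul rd x w = rd (mul x w) w := rfl
      _ = mul (rd x w) w := (A3 _ _).symm
      _ = mul (rd x w) (mul (rd y z) z) := by
            rw [show w = mul (rd y z) z from (A3 y z).symm]
      _ = mul (rd (mul (rd x w) y) z) z := (A5 _ _ _).symm
      _ = rd (mul (mul (rd x w) y) z) z := A3 _ _
      _ = star mul rd (mul (rd x w) y) z := rfl
  calc star mul rd x w
      = star mul rd (mul (rd x w) y) z := key
    _ = star mul rd (star mul rd (mul (rd x w) y) z) z := (F4 _ _ _).symm
    _ = star mul rd (star mul rd x w) z := by rw [← key]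
    _ = star mul rd x z := F4 _ _ _
end

section
/- Let (S; ·, \, /) be an algebra satisfying system (A), and define x ⋆ y := (x·y)/y. Then for all x, y, z in S: x ⋆ (y·z) = x ⋆ z, x ⋆ (y \ z) = x ⋆ z, and x ⋆ (y/z) = x ⋆ z. (Equivalently, the map sending x to the right ⋆-translation by x is a homomorphism onto a right zero semigroup.) -/
/-- In an algebra satisfying system (A),
`x ⋆ (y·z) = x ⋆ z`, `x ⋆ (y\z) = x ⋆ z` and `x ⋆ (y/z) = x ⋆ z`. -/
theorem star_right_translation_hom {S : Type*} (mul ld rd : S → S → S)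
    (A1 : ∀ x y : S, ld x (mul x y) = y)
    (A2 : ∀ x y : S, mul x (ld x y) = y)
    (A3 : ∀ x y : S, mul (rd x y) y = rd (mul x y) y)
    (A4 : ∀ x y z : S, rd (mul (rd x y) y) z = rd x z)
    (A5 : ∀ x y z : S, mul (rd (mul x y) z) z = mul x (mul (rd y z) z)) :
    ∀ x y z : S,
      star mul rd x (mul y z) = star mul rd x z ∧
      star mul rd x (ld y z) = star mul rd x z ∧
      star mul rd x (rd y z) = star mul rd x z := by
  -- star written with A3 reversed
  have S3 : ∀ a b, star mul rd a b = mul (rd a b) b := fun a b => (A3 a b).symm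
  -- A5 in star form : (a·b) ⋆ c = a · (b ⋆ c)
  have A5' : ∀ a b c, star mul rd (mul a b) c = mul a (star mul rd b c) := by
    intro a b c
    rw [S3, S3, A5]
  -- (a ⋆ b) ⋆ c = a ⋆ c
  have L0 : ∀ a b c, star mul rd (star mul rd a b) c = star mul rd a c := by
    intro a b c
    rw [S3 a b, S3, A4, ← S3]
  -- star commutes with left division
  have Lld : ∀ a t c, star mul rd (ld a t) c = ld a (star mul rd t c) := by
    intro a t c
    have h := A5' a (ld a t) c
    rw [A2] at h
    rw [h, A1]
  -- idempotency : a ⋆ a = a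
  have idem : ∀ a, star mul rd a a = a := by
    intro a
    have h1 : rd (mul (rd a a) a) a = rd a a := A4 a a a
    have h2 := A5 (rd a a) a a
    rw [h1] at h2
    have h3 := congrArg (ld (rd a a)) h2
    simp only [A1] at h3
    rw [S3]
    exact h3.symm
  -- key : if u ⋆ c = u then x ⋆ u = x ⋆ c
  have key : ∀ x u c, star mul rd u c = u → star mul rd x u = star mul rd x c := by
    intro x u c h
    have h1 : star mul rd (star mul rd x u) c = star mul rd x c := L0 x u c
    have h2 : star mul rd (star mul rd x u) c = star mul rd x u := by
      rw [S3 x u, A5', h]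
    exact h2.symm.trans h1
  intro x y z
  -- Goal 1 : x ⋆ (y·z) = x ⋆ z
  have hz : star mul rd z (mul y z) = z := by
    have hw := idem (mul y z)
    have h := Lld y (mul y z) (mul y z)
    rw [hw] at h
    simp only [A1] at h
    exact h
  have g1 : star mul rd x (mul y z) = star mul rd x z :=
    (key x z (mul y z) hz).symm
  refine ⟨g1, ?_, ?_⟩
  · -- Goal 2 : x ⋆ (y \ z) = x ⋆ z
    have g1' : star mul rd x (mul y (ld y z)) = star mul rd x (ld y z) := by
      have hz' : star mul rd (ld y z) (mul y (ld y z)) = ld y z := by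
        have hw := idem (mul y (ld y z))
        have h := Lld y (mul y (ld y z)) (mul y (ld y z))
        rw [hw] at h
        simp only [A1] at h
        exact h
      exact (key x (ld y z) (mul y (ld y z)) hz').symm
    rw [A2] at g1'
    exact g1'.symm
  · -- Goal 3 : x ⋆ (y / z) = x ⋆ z
    have h : star mul rd (rd y z) z = rd y z := A4 y z z
    exact key x (rd y z) z h
end

section
/- Let (S; ·, \, /) be an algebra satisfying system (A), and define x ⋆ y := (x·y)/y. Then for all x, y, z in S: (x ⋆ z)·(y ⋆ z) = (x·y) ⋆ z, (x ⋆ z) \ (y ⋆ z) = (x \ y) ⋆ z, and (x ⋆ z)/(y ⋆ z) = (x/y) ⋆ z. (Equivalently, the map sending x to the left ⋆-translation by x is a homomorphism with respect to pointwise operations.) -/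
/-- In an algebra satisfying system (A),
`(x ⋆ z)·(y ⋆ z) = (x·y) ⋆ z`, `(x ⋆ z)\(y ⋆ z) = (x\y) ⋆ z` and
`(x ⋆ z)/(y ⋆ z) = (x/y) ⋆ z`. -/
theorem star_left_translation_hom {S : Type*} (mul ld rd : S → S → S)
    (A1 : ∀ x y : S, ld x (mul x y) = y)
    (A2 : ∀ x y : S, mul x (ld x y) = y)
    (A3 : ∀ x y : S, mul (rd x y) y = rd (mul x y) y)
    (A4 : ∀ x y z : S, rd (mul (rd x y) y) z = rd x z)
    (A5 : ∀ x y z : S, mul (rd (mul x y) z) z = mul x (mul (rd y z) z)) :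
    ∀ x y z : S,
      mul (star mul rd x z) (star mul rd y z) = star mul rd (mul x y) z ∧
      ld (star mul rd x z) (star mul rd y z) = star mul rd (ld x y) z ∧
      rd (star mul rd x z) (star mul rd y z) = star mul rd (rd x y) z := by
  -- `star a b` unfolds by definition
  have sdef : ∀ a b : S, star mul rd a b = rd (mul a b) b := fun a b => rfl
  -- `star a b = (a/b)·b`
  have sA3 : ∀ a b : S, star mul rd a b = mul (rd a b) b := fun a b => (A3 a b).symm
  -- `(a ⋆ c)/z = a/z`
  have fact2 : ∀ a c z : S, rd (star mul rd a c) z = rd a z := by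
    intro a c z; rw [sA3]; exact A4 a c z
  -- `(a·b) ⋆ z = a·(b ⋆ z)`
  have L : ∀ a b z : S, star mul rd (mul a b) z = mul a (star mul rd b z) := by
    intro a b z
    rw [sdef, ← A3, A5, ← sA3]
  -- `(a ⋆ c) ⋆ z = a ⋆ z`
  have sidem : ∀ a c z : S, star mul rd (star mul rd a c) z = star mul rd a z := by
    intro a c z; rw [sA3 (star mul rd a c) z, fact2, ← sA3]
  -- `((a ⋆ b)·b)/z = (a·b)/z`
  have H : ∀ a b z : S, rd (mul (star mul rd a b) b) z = rd (mul a b) z := by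
    intro a b z
    have h1 : mul (star mul rd a b) b = star mul rd (mul a b) b := by
      rw [sdef a b, A3, ← sdef]
    rw [h1, fact2]
  -- key cancellation: `((a ⋆ z)·b)/z = (a·b)/z`
  have C : ∀ a b z : S, rd (mul (star mul rd a z) b) z = rd (mul a b) z := by
    intro a b z
    calc rd (mul (star mul rd a z) b) z
        = rd (mul (star mul rd (star mul rd a z) b) b) z := (H _ _ _).symm
      _ = rd (mul (star mul rd a b) b) z := by rw [sidem]
      _ = rd (mul a b) z := H _ _ _
  -- first identity
  have g1 : ∀ x y z : S, mul (star mul rd x z) (star mul rd y z)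
      = star mul rd (mul x y) z := by
    intro x y z
    rw [← L, sA3 (mul (star mul rd x z) y) z, C x y z, ← sA3]
  -- `z ⋆ z = z`
  have ss : ∀ z : S, star mul rd z z = z := by
    intro z
    have h1 : star mul rd (star mul rd z z) z = star mul rd z z := sidem z z z
    rw [sA3 z z] at h1
    rw [L] at h1
    have h2 := A1 (rd z z) (star mul rd z z)
    rw [h1, A1] at h2
    exact h2.symm
  -- `(q·b) ⋆ b = q·b`
  have keyfix : ∀ q b : S, star mul rd (mul q b) b = mul q b := by
    intro q b; rw [L, ss]
  -- `p ⋆ z = (p/y)·(y ⋆ z)`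
  have Q : ∀ p y z : S, star mul rd p z = mul (rd p y) (star mul rd y z) := by
    intro p y z
    rw [← L, sA3 (mul (rd p y) y) z, A4, ← sA3]
  -- second identity
  have g2 : ∀ x y z : S, ld (star mul rd x z) (star mul rd y z)
      = star mul rd (ld x y) z := by
    intro x y z
    have hy : star mul rd y z
        = mul (star mul rd x z) (star mul rd (ld x y) z) := by
      rw [g1, A2]
    rw [hy, A1]
  -- third identity
  have g3 : ∀ x y z : S, rd (star mul rd x z) (star mul rd y z)
      = star mul rd (rd x y) z := by
    intro x y z
    have hx : star mul rd x z
        = mul (star mul rd (rd x y) z) (star mul rd y z) := by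
      rw [g1, A3]
      exact (sidem x y z).symm
    have ha : star mul rd (rd x y) z
        = mul (rd (rd x y) y) (star mul rd y z) := Q (rd x y) y z
    rw [hx, ← sdef, ha]
    exact keyfix _ _
  exact fun x y z => ⟨g1 x y z, g2 x y z, g3 x y z⟩
end

section
/- An algebra (S; ·, \, /) with three binary operations satisfies system (A) if and only if it is a right product quasigroup, i.e., there exist a quasigroup Q, a right zero semigroup R, and a bijection f : S → Q × R preserving each of the operations ·, \ and / (the product carrying componentwise operations). -/
universe u

/-- An algebra `(S; ·, \, /)` satisfies system (A) if and only if it is a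
right product quasigroup: there exist a quasigroup `Q`, a right zero semigroup `R` and a
bijection `f : S → Q × R` preserving the three operations (componentwise on the product). -/
theorem systemA_iff_rightProductQuasigroup {S : Type u} (mul ld rd : S → S → S) :
    ((∀ x y : S, ld x (mul x y) = y) ∧
     (∀ x y : S, mul x (ld x y) = y) ∧
     (∀ x y : S, mul (rd x y) y = rd (mul x y) y) ∧
     (∀ x y z : S, rd (mul (rd x y) y) z = rd x z) ∧
     (∀ x y z : S, mul (rd (mul x y) z) z = mul x (mul (rd y z) z)))
    ↔
    ∃ (Q : Type u) (R : Type u) (mQ lQ rQ : Q → Q → Q) (mR lR rR : R → R → R)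
      (f : S → Q × R),
      (∀ x y, lQ x (mQ x y) = y) ∧
      (∀ x y, mQ x (lQ x y) = y) ∧
      (∀ x y, rQ (mQ x y) y = x) ∧
      (∀ x y, mQ (rQ x y) y = x) ∧
      (∀ x y, mR x y = y) ∧ (∀ x y, lR x y = y) ∧ (∀ x y, rR x y = y) ∧
      Function.Bijective f ∧
      (∀ x y, f (mul x y) = (mQ (f x).1 (f y).1, mR (f x).2 (f y).2)) ∧
      (∀ x y, f (ld x y) = (lQ (f x).1 (f y).1, lR (f x).2 (f y).2)) ∧
      (∀ x y, f (rd x y) = (rQ (f x).1 (f y).1, rR (f x).2 (f y).2)) := by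
  constructor
  · rintro ⟨A1, A2, A3, A4, A5⟩
    rcases isEmpty_or_nonempty S with hE | hne
    · exact ⟨S, S, mul, ld, rd, mul, ld, rd, fun x => (x, x),
        fun x => hE.elim x, fun x => hE.elim x, fun x => hE.elim x,
        fun x => hE.elim x, fun x => hE.elim x, fun x => hE.elim x,
        fun x => hE.elim x,
        ⟨fun {x} {_} _ => hE.elim x, fun p => hE.elim p.1⟩,
        fun x => hE.elim x, fun x => hE.elim x, fun x => hE.elim x⟩
    · obtain ⟨a⟩ := hne
      -- (v):  (x/y)·((y/z)·z) = (x/z)·z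
      have hv : ∀ x y z, mul (rd x y) (mul (rd y z) z) = mul (rd x z) z := by
        intro x y z
        have h := A5 (rd x y) y z
        rw [A4] at h
        exact h.symm
      -- (x/x)·x = x
      have hxx : ∀ y, mul (rd y y) y = y := by
        intro y
        have h1 := congrArg (ld (rd y y)) (hv y y y)
        rwa [A1, A1] at h1
      -- ((x·y)/y)·y = x·y
      have hxi : ∀ x y, mul (rd (mul x y) y) y = mul x y := by
        intro x y
        rw [A5, hxx]
      -- ((x/z)·z)·y = x·y
      have hxii : ∀ x y z, mul (mul (rd x z) z) y = mul x y := by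
        intro x y z
        calc mul (mul (rd x z) z) y
            = mul (rd (mul (mul (rd x z) z) y) y) y := (hxi _ y).symm
          _ = mul (mul (rd (mul (rd x z) z) y) y) y := by rw [← A3]
          _ = mul (mul (rd x y) y) y := by rw [A4]
          _ = mul (rd (mul x y) y) y := by rw [A3]
          _ = mul x y := hxi x y
      -- ((x/z)·z)\y = x\y
      have hxiii : ∀ x y z, ld (mul (rd x z) z) y = ld x y := by
        intro x y z
        have h1 : mul (mul (rd x z) z) (ld x y) = y := by rw [hxii, A2]
        calc ld (mul (rd x z) z) y
            = ld (mul (rd x z) z) (mul (mul (rd x z) z) (ld x y)) := by rw [h1]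
          _ = ld x y := A1 _ _
      -- ((x/y)/y)·y = x/y
      have hvii : ∀ x y, mul (rd (rd x y) y) y = rd x y := by
        intro x y
        rw [A3, A4]
      -- if (y/a)·a = y then (u/y)·y = (u/a)·a
      have h6 : ∀ u y, mul (rd y a) a = y → mul (rd u y) y = mul (rd u a) a := by
        intro u y hy
        have h := hv u y a
        rwa [hy] at h
      -- ((x\y)/a)·a = x\((y/a)·a)
      have hmL : ∀ x y, mul (rd (ld x y) a) a = ld x (mul (rd y a) a) := by
        intro x y
        have h1 : mul x (mul (rd (ld x y) a) a) = mul (rd y a) a := by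
          rw [← A5, A2]
        calc mul (rd (ld x y) a) a
            = ld x (mul x (mul (rd (ld x y) a) a)) := (A1 _ _).symm
          _ = ld x (mul (rd y a) a) := by rw [h1]
      -- projection with base (y/z)·z equals projection with base z
      have hPw : ∀ u y z,
          mul (rd u (mul (rd y z) z)) (mul (rd y z) z) = mul (rd u z) z := by
        intro u y z
        have h := hv u (mul (rd y z) z) z
        rwa [A4] at h
      -- ((x/y)/a)·a = x/((y/a)·a)
      have hmR : ∀ x y, mul (rd (rd x y) a) a = rd x (mul (rd y a) a) := by
        intro x y
        have hww : mul (rd (mul (rd y a) a) a) a = mul (rd y a) a := by rw [A4]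
        have h2 : mul (mul (rd (rd x y) a) a) (mul (rd y a) a) = mul (rd x a) a := by
          rw [hxii]; exact hv x y a
        calc mul (rd (rd x y) a) a
            = mul (rd (mul (rd (rd x y) a) a) (mul (rd y a) a)) (mul (rd y a) a) := by
              rw [A4]; exact (h6 _ _ hww).symm
          _ = rd (mul (mul (rd (rd x y) a) a) (mul (rd y a) a)) (mul (rd y a) a) := A3 _ _
          _ = rd (mul (rd x a) a) (mul (rd y a) a) := by rw [h2]
          _ = rd x (mul (rd y a) a) := A4 _ _ _
      -- (a/(x·y))·(x·y) = (a/y)·y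
      have h6m : ∀ x y, mul (rd a (mul x y)) (mul x y) = mul (rd a y) y := by
        intro x y
        have h := hv a (mul x y) y
        rwa [hxi] at h
      -- (a/(x\y))·(x\y) = (a/y)·y
      have h6l : ∀ x y, mul (rd a (ld x y)) (ld x y) = mul (rd a y) y := by
        intro x y
        have h := h6m x (ld x y)
        rw [A2] at h
        exact h.symm
      -- (a/(x/y))·(x/y) = (a/y)·y
      have h6r : ∀ x y, mul (rd a (rd x y)) (rd x y) = mul (rd a y) y := by
        intro x y
        have h := hv a (rd x y) y
        rwa [hvii] at h
      have hqmem : ∀ x : S, mul (rd (mul (rd x a) a) a) a = mul (rd x a) a := by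
        intro x; rw [A4]
      have hrmem : ∀ x : S,
          mul (rd a (mul (rd a x) x)) (mul (rd a x) x) = mul (rd a x) x :=
        fun x => h6m (rd a x) x
      refine ⟨{x : S // mul (rd x a) a = x}, {x : S // mul (rd a x) x = x},
        (fun q r => ⟨mul q.1 r.1, by rw [A5, r.2]⟩),
        (fun q r => ⟨ld q.1 r.1, by rw [hmL, r.2]⟩),
        (fun q r => ⟨rd q.1 r.1, by rw [hmR, r.2]⟩),
        (fun _ r => r), (fun _ r => r), (fun _ r => r),
        (fun x => (⟨mul (rd x a) a, hqmem x⟩, ⟨mul (rd a x) x, hrmem x⟩)),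
        fun q r => Subtype.ext (A1 q.1 r.1),
        fun q r => Subtype.ext (A2 q.1 r.1),
        fun q r => Subtype.ext (show rd (mul q.1 r.1) r.1 = q.1 by
          rw [← A3, h6 _ _ r.2]; exact q.2),
        fun q r => Subtype.ext (show mul (rd q.1 r.1) r.1 = q.1 by
          rw [h6 _ _ r.2]; exact q.2),
        fun _ _ => rfl, fun _ _ => rfl, fun _ _ => rfl,
        ?_, ?_, ?_, ?_⟩
      · refine Function.bijective_iff_has_inverse.mpr
          ⟨fun p => mul (rd p.1.1 p.2.1) p.2.1, ?_, ?_⟩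
        · intro x
          show mul (rd (mul (rd x a) a) (mul (rd a x) x)) (mul (rd a x) x) = x
          rw [hPw, A4]
          exact hxx x
        · rintro ⟨q, r⟩
          refine Prod.ext (Subtype.ext ?_) (Subtype.ext ?_)
          · show mul (rd (mul (rd q.1 r.1) r.1) a) a = q.1
            rw [A4]; exact q.2
          · show mul (rd a (mul (rd q.1 r.1) r.1)) (mul (rd q.1 r.1) r.1) = r.1
            rw [hPw]; exact r.2
      · exact fun x y => Prod.ext
          (Subtype.ext (show mul (rd (mul x y) a) a
              = mul (mul (rd x a) a) (mul (rd y a) a) by rw [A5, hxii]))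
          (Subtype.ext (h6m x y))
      · exact fun x y => Prod.ext
          (Subtype.ext (show mul (rd (ld x y) a) a
              = ld (mul (rd x a) a) (mul (rd y a) a) by rw [hmL, hxiii]))
          (Subtype.ext (h6l x y))
      · exact fun x y => Prod.ext
          (Subtype.ext (show mul (rd (rd x y) a) a
              = rd (mul (rd x a) a) (mul (rd y a) a) by rw [hmR, A4]))
          (Subtype.ext (h6r x y))
  · rintro ⟨Q, R, mQ, lQ, rQ, mR, lR, rR, f, h1, h2, h3, h4, h5, h6, h7, hbij, hm, hl, hr⟩
    refine ⟨fun x y => hbij.1 ?_, fun x y => hbij.1 ?_, fun x y => hbij.1 ?_,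
      fun x y z => hbij.1 ?_, fun x y z => hbij.1 ?_⟩ <;>
      simp [hm, hl, hr, h1, h2, h3, h4, h5, h6, h7]
end

section
/- Let (S; ·, \, /) be an algebra satisfying system (A). Then the following are equivalent: (i) (x/x)·y = y for all x, y; (ii) (x/x)·z = (y/y)·z for all x, y, z; (iii) (x·y)/(x·y) = y/y for all x, y; (iv) (x \ y)/(x \ y) = y/y for all x, y; (v) (x/y)/(x/y) = y/y for all x, y. -/
/-- In an algebra satisfying system (A), the five listed identities
are equivalent. -/
theorem leftLoop_conditions_tfae {S : Type*} (mul ld rd : S → S → S)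
    (A1 : ∀ x y : S, ld x (mul x y) = y)
    (A2 : ∀ x y : S, mul x (ld x y) = y)
    (A3 : ∀ x y : S, mul (rd x y) y = rd (mul x y) y)
    (A4 : ∀ x y z : S, rd (mul (rd x y) y) z = rd x z)
    (A5 : ∀ x y z : S, mul (rd (mul x y) z) z = mul x (mul (rd y z) z)) :
    [(∀ x y : S, mul (rd x x) y = y),
     (∀ x y z : S, mul (rd x x) z = mul (rd y y) z),
     (∀ x y : S, rd (mul x y) (mul x y) = rd y y),
     (∀ x y : S, rd (ld x y) (ld x y) = rd y y),
     (∀ x y : S, rd (rd x y) (rd x y) = rd y y)].TFAE := by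
  -- left translations are injective
  have inj : ∀ a u v : S, mul a u = mul a v → u = v := by
    intro a u v h
    rw [← A1 a u, h, A1]
  -- core lemma: with s := (y/y)·y, if (s/s)·s = (y/y)·s then (y/y)·y = y
  have t1 : ∀ y : S,
      mul (rd (mul (rd y y) y) (mul (rd y y) y)) (mul (rd y y) y)
        = mul (rd y y) (mul (rd y y) y) →
      mul (rd y y) y = y := by
    intro y H
    have star := A5 (rd y y) y (mul (rd y y) y)
    -- star : mul (rd (mul (rd y y) y) s) s = mul (rd y y) (mul (rd y s) s)
    rw [A4 y y (mul (rd y y) y)] at star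
    -- star : mul (rd y s) s = mul (rd y y) (mul (rd y s) s)
    rw [A4 y y (mul (rd y y) y)] at H
    -- H : mul (rd y s) s = mul (rd y y) s
    rw [H] at star
    -- star : mul (rd y y) s = mul (rd y y) (mul (rd y y) s)
    have h1 := inj _ _ _ star
    -- h1 : s = mul (rd y y) s, i.e. mul (rd y y) y = mul (rd y y) (mul (rd y y) y)
    exact (inj _ _ _ h1).symm
  tfae_have 1 → 2 := by
    intro h x y z
    rw [h x z, h y z]
  tfae_have 2 → 1 := by
    intro h x y
    have T1y : ∀ b : S, mul (rd b b) b = b := by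
      intro b
      exact t1 b (h (mul (rd b b) b) b (mul (rd b b) b))
    rw [h x y y]
    exact T1y y
  tfae_have 1 → 3 := by
    intro h x y
    have s1 : mul (rd y (mul x y)) (mul x y) = y := by
      have h5 := A5 x y (mul x y)
      rw [h (mul x y) (mul x y)] at h5
      exact (inj x _ _ h5).symm
    have s2 : mul (rd (rd y y) y) y = rd y y := by
      have h3 := A3 (rd y y) y
      rw [h y y] at h3
      exact h3
    have s4 : rd (mul x y) (mul x y) = mul (rd (rd y y) (mul x y)) (mul x y) := by
      have h3 := A3 (rd y y) (mul x y)
      rw [h y (mul x y)] at h3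
      exact h3.symm
    have s3 := A5 (rd (rd y y) y) y (mul x y)
    rw [A4 (rd y y) y (mul x y), s1, s2] at s3
    exact s4.trans s3
  tfae_have 3 → 1 := by
    intro h x y
    have T1y : ∀ b : S, mul (rd b b) b = b := by
      intro b
      apply t1 b
      rw [h (rd b b) b]
    have T2 : ∀ w b : S, mul (rd b b) (mul w b) = mul w b := by
      intro w b
      have hb := T1y (mul w b)
      rw [h w b] at hb
      exact hb
    have StepB : mul (rd (mul (rd x x) y) x) x = mul (rd y x) x := by
      have h5 := A5 (rd x x) y x
      rw [T2 (rd y x) x] at h5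
      exact h5
    have StepC : rd (mul (rd x x) y) y = rd y y := by
      have h1 := A4 (mul (rd x x) y) x y
      have h2 := A4 y x y
      rw [StepB] at h1
      exact h1.symm.trans h2
    have StepD : mul (rd (mul (rd x x) y) y) y = mul (rd x x) y := by
      have h5 := A5 (rd x x) y y
      rw [T1y y] at h5
      exact h5
    rw [StepC, T1y y] at StepD
    exact StepD.symm
  tfae_have 3 → 4 := by
    intro h x y
    have h1 := h x (ld x y)
    rw [A2 x y] at h1
    exact h1.symm
  tfae_have 4 → 3 := by
    intro h x y
    have h1 := h x (mul x y)
    rw [A1 x y] at h1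
    exact h1.symm
  tfae_have 3 → 5 := by
    intro h x y
    have pf : mul (rd (rd x y) y) y = rd x y := by
      rw [A3 (rd x y) y, A4 x y y]
    have h3 := h (rd (rd x y) y) y
    rw [pf] at h3
    exact h3
  tfae_have 5 → 3 := by
    intro h x y
    have T1y : ∀ b : S, mul (rd b b) b = b := by
      intro b
      apply t1 b
      have h3 := A3 b b
      have h5 := h (mul b b) b
      rw [← h3] at h5
      rw [h5]
    have key : rd (mul (mul x y) y) y = mul x y := by
      have h5 := A5 x y y
      rw [T1y y] at h5
      rw [A3 (mul x y) y] at h5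
      exact h5
    have h5 := h (mul (mul x y) y) y
    rw [key] at h5
    exact h5
  tfae_finish
end

section
/- Let (S; ·, \, /) be an algebra satisfying system (A). Then S satisfies the identity (x/x)·y = y (for all x, y) if and only if S is a right product left loop, i.e., there exist a left loop L, a right zero semigroup R, and a bijection f : S → L × R preserving each of the operations ·, \ and / (the product carrying componentwise operations). -/
universe u

/-- An algebra satisfying system (A) satisfies `(x/x)·y = y` iff it is a
right product left loop: there exist a left loop `L` (a quasigroup with `x/x = y/y`),
a right zero semigroup `R` and an operation-preserving bijection `f : S → L × R`. -/
theorem systemA_leftLoopIdentity_iff_rightProductLeftLoop {S : Type u}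
    (mul ld rd : S → S → S)
    (A1 : ∀ x y : S, ld x (mul x y) = y)
    (A2 : ∀ x y : S, mul x (ld x y) = y)
    (A3 : ∀ x y : S, mul (rd x y) y = rd (mul x y) y)
    (A4 : ∀ x y z : S, rd (mul (rd x y) y) z = rd x z)
    (A5 : ∀ x y z : S, mul (rd (mul x y) z) z = mul x (mul (rd y z) z)) :
    (∀ x y : S, mul (rd x x) y = y)
    ↔
    ∃ (L : Type u) (R : Type u) (mL lL rL : L → L → L) (mR lR rR : R → R → R)
      (f : S → L × R),
      (∀ x y, lL x (mL x y) = y) ∧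
      (∀ x y, mL x (lL x y) = y) ∧
      (∀ x y, rL (mL x y) y = x) ∧
      (∀ x y, mL (rL x y) y = x) ∧
      (∀ x y, rL x x = rL y y) ∧
      (∀ x y, mR x y = y) ∧ (∀ x y, lR x y = y) ∧ (∀ x y, rR x y = y) ∧
      Function.Bijective f ∧
      (∀ x y, f (mul x y) = (mL (f x).1 (f y).1, mR (f x).2 (f y).2)) ∧
      (∀ x y, f (ld x y) = (lL (f x).1 (f y).1, lR (f x).2 (f y).2)) ∧
      (∀ x y, f (rd x y) = (rL (f x).1 (f y).1, rR (f x).2 (f y).2)) := by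
  constructor
  · intro LL
    by_cases hne : Nonempty S
    · obtain ⟨a⟩ := hne
      -- notation: k x y := mul (rd x y) y ("replace second component"), e x := rd x x
      -- basic derived identities
      have hkxx : ∀ x : S, mul (rd x x) x = x := fun x => LL x x
      have hkk : ∀ x y z : S, mul (rd (mul (rd x y) y) z) z = mul (rd x z) z := by
        intro x y z; rw [A4]
      have hkrd : ∀ x y : S, mul (rd (rd x y) y) y = rd x y := by
        intro x y; rw [A3, A4]
      have hd9 : ∀ x w z : S, mul (rd x w) (mul (rd w z) z) = mul (rd x z) z := by
        intro x w z; rw [← A5, A4]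
      have hd10 : ∀ w z : S, mul (rd w z) z = w →
          ∀ p : S, mul (rd p w) w = mul (rd p z) z := by
        intro w z hw p
        calc mul (rd p w) w = mul (rd p w) (mul (rd w z) z) := by rw [hw]
          _ = mul (rd p z) z := hd9 p w z
      have ht1 : ∀ x : S, mul (rd x (rd x x)) (rd x x) = x := by
        intro x
        exact (hd10 (rd x x) x (hkrd x x) x).trans (hkxx x)
      have ht10 : ∀ x z : S, mul (rd (rd x x) z) z = rd z z := by
        intro x z; rw [A3, LL]
      have hd8 : ∀ x y : S, mul (rd (mul x y) y) y = mul x y := by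
        intro x y; rw [A5, hkxx]
      have ht2 : ∀ x y : S, rd (mul x y) (mul x y) = rd y y := by
        intro x y
        exact (ht10 x (mul x y)).symm.trans
          ((hd10 (mul x y) y (hd8 x y) (rd x x)).trans (ht10 x y))
      have ht4 : ∀ x y : S, rd (rd x y) (rd x y) = rd y y := by
        intro x y
        exact (ht10 x (rd x y)).symm.trans
          ((hd10 (rd x y) y (hkrd x y) (rd x x)).trans (ht10 x y))
      have ht3 : ∀ x y : S, rd (ld x y) (ld x y) = rd y y := by
        intro x y
        have h := ht2 x (ld x y)
        rw [A2] at h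
        exact h.symm
      have hd7 : ∀ x : S, rd (rd x x) (rd x x) = rd x x := fun x => ht4 x x
      have hd15 : ∀ x y : S, mul (mul (rd x y) y) y = mul x y := by
        intro x y; rw [A3, hd8]
      have hd16 : ∀ x w y : S, mul (mul (rd x w) w) y = mul x y := by
        intro x w y
        calc mul (mul (rd x w) w) y
            = mul (mul (rd (mul (rd x w) w) y) y) y := (hd15 (mul (rd x w) w) y).symm
          _ = mul (mul (rd x y) y) y := by rw [A4]
          _ = mul x y := hd15 x y
      have hd17 : ∀ x w y : S, ld (mul (rd x w) w) y = ld x y := by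
        intro x w y
        have h := A2 (mul (rd x w) w) y
        rw [hd16] at h
        calc ld (mul (rd x w) w) y
            = ld x (mul x (ld (mul (rd x w) w) y)) := (A1 x _).symm
          _ = ld x y := by rw [h]
      have hd5 : ∀ x y z : S, mul (rd (ld x y) z) z = ld x (mul (rd y z) z) := by
        intro x y z
        have h := A5 x (ld x y) z
        rw [A2] at h
        calc mul (rd (ld x y) z) z
            = ld x (mul x (mul (rd (ld x y) z) z)) := (A1 x _).symm
          _ = ld x (mul (rd y z) z) := by rw [← h]
      -- closure of the fiber {x | k x a = x} under the three operations
      have hCm : ∀ u v : S, mul (rd v a) a = v →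
          mul (rd (mul u v) a) a = mul u v := by
        intro u v hv; rw [A5, hv]
      have hCl : ∀ u v : S, mul (rd v a) a = v →
          mul (rd (ld u v) a) a = ld u v := by
        intro u v hv; rw [hd5, hv]
      have hCr : ∀ u v : S, mul (rd v a) a = v →
          mul (rd (rd u v) a) a = rd u v := by
        intro u v hv
        have h := hd10 v a hv (rd u v)
        rw [hkrd] at h
        exact h.symm
      have hT6 : ∀ u v : S, mul (rd u a) a = u → mul (rd v a) a = v →
          mul (rd u v) v = u := by
        intro u v hu hv
        exact (hd10 v a hv u).trans hu
      -- f preserves the first components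
      have hFm : ∀ x y : S,
          mul (mul (rd x a) a) (mul (rd y a) a) = mul (rd (mul x y) a) a := by
        intro x y; rw [hd16, ← A5]
      have hFl : ∀ x y : S,
          ld (mul (rd x a) a) (mul (rd y a) a) = mul (rd (ld x y) a) a := by
        intro x y; rw [hd17, ← hd5]
      have hFr : ∀ x y : S,
          rd (mul (rd x a) a) (mul (rd y a) a) = mul (rd (rd x y) a) a := by
        intro x y
        have hvfix : mul (rd (mul (rd y a) a) a) a = mul (rd y a) a := hkk y a a
        have h1 : mul (rd x (mul (rd y a) a)) (mul (rd y a) a) = mul (rd x a) a := by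
          have h := hd9 x (mul (rd y a) a) a
          rwa [hvfix] at h
        have h2 : mul (mul (rd (rd x y) a) a) (mul (rd y a) a) = mul (rd x a) a := by
          rw [hd16]; exact hd9 x y a
        have hrfib : mul (rd (rd x (mul (rd y a) a)) a) a = rd x (mul (rd y a) a) :=
          hCr x _ hvfix
        have hr'fib : mul (rd (mul (rd (rd x y) a) a) a) a = mul (rd (rd x y) a) a :=
          hkk (rd x y) a a
        have key : rd x (mul (rd y a) a) = mul (rd (rd x y) a) a := by
          have e1 : rd (mul (rd x (mul (rd y a) a)) (mul (rd y a) a)) (mul (rd y a) a)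
              = rd x (mul (rd y a) a) :=
            (A3 _ _).symm.trans (hT6 _ _ hrfib hvfix)
          have e2 : rd (mul (mul (rd (rd x y) a) a) (mul (rd y a) a)) (mul (rd y a) a)
              = mul (rd (rd x y) a) a :=
            (A3 _ _).symm.trans (hT6 _ _ hr'fib hvfix)
          rw [← e1, h1, ← h2, e2]
        rw [A4]
        exact key
      refine ⟨{x : S // mul (rd x a) a = x}, {x : S // rd x x = x},
        (fun u v => ⟨mul u.1 v.1, hCm u.1 v.1 v.2⟩),
        (fun u v => ⟨ld u.1 v.1, hCl u.1 v.1 v.2⟩),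
        (fun u v => ⟨rd u.1 v.1, hCr u.1 v.1 v.2⟩),
        (fun _ v => v), (fun _ v => v), (fun _ v => v),
        (fun x => (⟨mul (rd x a) a, hkk x a a⟩, ⟨rd x x, hd7 x⟩)),
        ?_, ?_, ?_, ?_, ?_, ?_, ?_, ?_, ?_, ?_, ?_, ?_⟩
      · intro u v; exact Subtype.ext (A1 u.1 v.1)
      · intro u v; exact Subtype.ext (A2 u.1 v.1)
      · intro u v
        apply Subtype.ext
        show rd (mul u.1 v.1) v.1 = u.1
        rw [← A3]
        exact hT6 u.1 v.1 u.2 v.2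
      · intro u v; exact Subtype.ext (hT6 u.1 v.1 u.2 v.2)
      · intro u v
        apply Subtype.ext
        show rd u.1 u.1 = rd v.1 v.1
        have hu : rd u.1 u.1 = rd a a := by
          have h := ht2 (rd u.1 a) a
          rwa [u.2] at h
        have hv : rd v.1 v.1 = rd a a := by
          have h := ht2 (rd v.1 a) a
          rwa [v.2] at h
        exact hu.trans hv.symm
      · intro x y; rfl
      · intro x y; rfl
      · intro x y; rfl
      · refine Function.bijective_iff_has_inverse.mpr
          ⟨fun p => mul (rd p.1.1 p.2.1) p.2.1, fun x => ?_, fun p => ?_⟩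
        · show mul (rd (mul (rd x a) a) (rd x x)) (rd x x) = x
          rw [A4]
          exact ht1 x
        · obtain ⟨⟨u, hu⟩, ⟨r, hr⟩⟩ := p
          refine Prod.ext (Subtype.ext ?_) (Subtype.ext ?_)
          · show mul (rd (mul (rd u r) r) a) a = u
            rw [A4]
            exact hu
          · show rd (mul (rd u r) r) (mul (rd u r) r) = r
            exact (ht2 (rd u r) r).trans hr
      · intro x y
        exact Prod.ext (Subtype.ext (hFm x y).symm) (Subtype.ext (ht2 x y))
      · intro x y
        exact Prod.ext (Subtype.ext (hFl x y).symm) (Subtype.ext (ht3 x y))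
      · intro x y
        exact Prod.ext (Subtype.ext (hFr x y).symm) (Subtype.ext (ht4 x y))
    · -- S is empty
      refine ⟨PEmpty.{u+1}, PEmpty.{u+1},
        (fun x _ => x), (fun x _ => x), (fun x _ => x),
        (fun _ v => v), (fun _ v => v), (fun _ v => v),
        (fun x => absurd ⟨x⟩ hne),
        (fun x _ => x.elim), (fun x _ => x.elim), (fun x _ => x.elim),
        (fun x _ => x.elim), (fun x _ => x.elim),
        (fun _ _ => rfl), (fun _ _ => rfl), (fun _ _ => rfl),
        ⟨fun {p q} _ => absurd ⟨p⟩ hne, fun p => p.1.elim⟩,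
        (fun x _ => absurd ⟨x⟩ hne), (fun x _ => absurd ⟨x⟩ hne),
        (fun x _ => absurd ⟨x⟩ hne)⟩
  · rintro ⟨L, R, mL, lL, rL, mR, lR, rR, f, h1, h2, h3, h4, h5, h6, h7, h8,
      hbij, hm, hl, hr⟩ x y
    apply hbij.injective
    simp only [hm, hr, h6]
    rw [h5 (f x).1 (f y).1, h4]
end

section
/- Let (S; ·, \, /) be an algebra satisfying system (A). Then S satisfies the identity (x \ x)·z = (y \ y)·z (for all x, y, z) if and only if S is a right product right loop, i.e., there exist a right loop Q, a right zero semigroup R, and a bijection f : S → Q × R preserving each of the operations ·, \ and / (the product carrying componentwise operations). -/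
universe u

/-- An algebra satisfying system (A) satisfies `(x\x)·z = (y\y)·z` iff it is
a right product right loop: there exist a right loop `Q` (a quasigroup with `x\x = y\y`),
a right zero semigroup `R` and an operation-preserving bijection `f : S → Q × R`. -/
theorem systemA_rightLoopIdentity_iff_rightProductRightLoop {S : Type u}
    (mul ld rd : S → S → S)
    (A1 : ∀ x y : S, ld x (mul x y) = y)
    (A2 : ∀ x y : S, mul x (ld x y) = y)
    (A3 : ∀ x y : S, mul (rd x y) y = rd (mul x y) y)
    (A4 : ∀ x y z : S, rd (mul (rd x y) y) z = rd x z)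
    (A5 : ∀ x y z : S, mul (rd (mul x y) z) z = mul x (mul (rd y z) z)) :
    (∀ x y z : S, mul (ld x x) z = mul (ld y y) z)
    ↔
    ∃ (Q : Type u) (R : Type u) (mQ lQ rQ : Q → Q → Q) (mR lR rR : R → R → R)
      (f : S → Q × R),
      (∀ x y, lQ x (mQ x y) = y) ∧
      (∀ x y, mQ x (lQ x y) = y) ∧
      (∀ x y, rQ (mQ x y) y = x) ∧
      (∀ x y, mQ (rQ x y) y = x) ∧
      (∀ x y, lQ x x = lQ y y) ∧
      (∀ x y, mR x y = y) ∧ (∀ x y, lR x y = y) ∧ (∀ x y, rR x y = y) ∧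
      Function.Bijective f ∧
      (∀ x y, f (mul x y) = (mQ (f x).1 (f y).1, mR (f x).2 (f y).2)) ∧
      (∀ x y, f (ld x y) = (lQ (f x).1 (f y).1, lR (f x).2 (f y).2)) ∧
      (∀ x y, f (rd x y) = (rQ (f x).1 (f y).1, rR (f x).2 (f y).2)) := by
  constructor
  · intro hyp
    rcases isEmpty_or_nonempty S with hS | hS
    · exact ⟨S, S, mul, mul, mul, mul, mul, mul, fun x => (x, x),
        fun x => (hS.false x).elim, fun x => (hS.false x).elim, fun x => (hS.false x).elim,
        fun x => (hS.false x).elim, fun x => (hS.false x).elim, fun x => (hS.false x).elim,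
        fun x => (hS.false x).elim, fun x => (hS.false x).elim,
        ⟨fun {u} {v} _ => (hS.false u).elim, fun b => (hS.false b.1).elim⟩,
        fun x => (hS.false x).elim, fun x => (hS.false x).elim, fun x => (hS.false x).elim⟩
    · obtain ⟨a⟩ := hS
      -- cancellation on the left
      have cancel : ∀ x u v : S, mul x u = mul x v → u = v := by
        intro x u v h
        have h2 := congrArg (ld x) h
        rwa [A1, A1] at h2
      -- notation: P x y := mul (rd x y) y, the "local projection"
      have F1 : ∀ x y z : S, mul (rd (mul (rd x y) y) z) z = mul (rd x z) z := by
        intro x y z; rw [A4]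
      have GP : ∀ x y z : S, ld x (mul (rd y z) z) = mul (rd (ld x y) z) z := by
        intro x y z
        have h := A5 x (ld x y) z
        rw [A2 x y] at h
        rw [h, A1]
      have HP : ∀ y : S, mul (rd y y) y = y := by
        intro y
        have h := A5 (rd y y) y y
        rw [A4 y y y] at h
        exact cancel (rd y y) _ _ h.symm
      have LP : ∀ x y : S, mul (rd (mul x y) y) y = mul x y := by
        intro x y
        rw [A5 x y y, HP y]
      have K1 : ∀ x z : S, mul (mul (rd x z) z) z = mul x z := by
        intro x z
        rw [A3 x z]
        exact LP x z
      have NP : ∀ x u z : S, mul (rd x (mul u z)) (mul u z) = mul (rd x z) z := by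
        intro x u z
        have inv : mul (rd (mul (rd x (mul u z)) (mul u z)) z) z
            = mul (rd x (mul u z)) (mul u z) := by
          rw [A5 (rd x (mul u z)) (mul u z) z, LP u z]
        have h2 : mul (rd (mul (rd x (mul u z)) (mul u z)) z) z = mul (rd x z) z := by
          rw [A4 x (mul u z) z]
        exact inv.symm.trans h2
      have I3 : ∀ x y : S, mul (rd (rd x y) y) y = rd x y := by
        intro x y
        rw [A3 (rd x y) y]
        exact A4 x y y
      have PP : ∀ t x y : S, mul (rd t (rd x y)) (rd x y) = mul (rd t y) y := by
        intro t x y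
        have inv : mul (rd (mul (rd t (rd x y)) (rd x y)) y) y
            = mul (rd t (rd x y)) (rd x y) := by
          rw [A5 (rd t (rd x y)) (rd x y) y, I3 x y]
        have h2 : mul (rd (mul (rd t (rd x y)) (rd x y)) y) y = mul (rd t y) y := by
          rw [A4 t (rd x y) y]
        exact inv.symm.trans h2
      have C1 : ∀ x t z : S, mul (mul (rd x t) t) z = mul x z := by
        intro x t z
        calc mul (mul (rd x t) t) z
            = mul (mul (rd (mul (rd x t) t) z) z) z := (K1 (mul (rd x t) t) z).symm
          _ = mul (mul (rd x z) z) z := by rw [A4 x t z]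
          _ = mul x z := K1 x z
      have C1ld : ∀ x t w : S, ld (mul (rd x t) t) w = ld x w := by
        intro x t w
        have h : mul (mul (rd x t) t) (ld x w) = w := by
          rw [C1 x t (ld x w), A2 x w]
        conv_lhs => rw [← h]
        rw [A1]
      have U : ∀ v w1 w2 : S, mul w1 v = mul w2 v → mul (rd w1 v) v = w1 →
          mul (rd w2 v) v = w2 → w1 = w2 := by
        intro v w1 w2 h h1 h2
        rw [← h1, ← h2, A3 w1 v, A3 w2 v, h]
      -- closure of the "row" through a
      have mcl : ∀ u v : S, mul (rd v a) a = v → mul (rd (mul u v) a) a = mul u v := by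
        intro u v hv
        rw [A5 u v a, hv]
      have lcl : ∀ u v : S, mul (rd v a) a = v → mul (rd (ld u v) a) a = ld u v := by
        intro u v hv
        rw [← GP u v a, hv]
      have rcl : ∀ u v : S, mul (rd v a) a = v → mul (rd (rd u v) a) a = rd u v := by
        intro u v hv
        have h2 := NP (rd u v) (rd v a) a
        rw [hv] at h2
        rw [← h2]
        exact I3 u v
      -- the second projection is invariant
      have mcol : ∀ u v : S, mul (rd a (mul u v)) (mul u v) = mul (rd a v) v :=
        fun u v => NP a u v
      have lcol : ∀ u v : S, mul (rd a (ld u v)) (ld u v) = mul (rd a v) v := by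
        intro u v
        have h := NP a u (ld u v)
        rw [A2 u v] at h
        exact h.symm
      have rcol : ∀ u v : S, mul (rd a (rd u v)) (rd u v) = mul (rd a v) v :=
        fun u v => PP a u v
      -- first-projection homomorphism identities
      have hm1 : ∀ x y : S, mul (rd (mul x y) a) a
          = mul (mul (rd x a) a) (mul (rd y a) a) := by
        intro x y
        rw [C1 x a (mul (rd y a) a)]
        exact A5 x y a
      have hl1 : ∀ x y : S, mul (rd (ld x y) a) a
          = ld (mul (rd x a) a) (mul (rd y a) a) := by
        intro x y
        rw [C1ld x a (mul (rd y a) a)]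
        exact (GP x y a).symm
      have hr1 : ∀ x y : S, mul (rd (rd x y) a) a
          = rd (mul (rd x a) a) (mul (rd y a) a) := by
        intro x y
        refine U (mul (rd y a) a) _ _ ?_ ?_ ?_
        · have hL : mul (mul (rd (rd x y) a) a) (mul (rd y a) a) = mul (rd x a) a := by
            rw [C1 (rd x y) a (mul (rd y a) a), ← A5 (rd x y) y a, A4 x y a]
          have hR : mul (rd (mul (rd x a) a) (mul (rd y a) a)) (mul (rd y a) a)
              = mul (rd x a) a := by
            rw [F1 x a (mul (rd y a) a)]
            exact NP x (rd y a) a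
          rw [hL, hR]
        · have h := NP (mul (rd (rd x y) a) a) (rd y a) a
          rw [F1 (rd x y) a a] at h
          exact h
        · exact I3 (mul (rd x a) a) (mul (rd y a) a)
      -- the right-loop identity on the row
      have loopId : ∀ u v : S, mul (rd u a) a = u → mul (rd v a) a = v →
          ld u u = ld v v := by
        intro u v hu hv
        have h1 : mul (rd (ld u u) a) a = mul (rd (ld v v) a) a := by
          rw [A3 (ld u u) a, A3 (ld v v) a, hyp u v a]
        rw [← lcl u u hu, ← lcl v v hv]
        exact h1
      -- injectivity
      have inj : ∀ x y : S, mul (rd x a) a = mul (rd y a) a →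
          mul (rd a x) x = mul (rd a y) y → x = y := by
        intro x y h1 h2
        have e : rd y y = rd x y := by
          rw [← A4 y a y, ← h1, A4 x a y]
        have hy : mul (rd x y) y = y := by
          rw [← e]
          exact HP y
        have hx : mul (rd x y) y = x := by
          have e1 := NP x (rd a x) x
          rw [h2, HP x] at e1
          exact (NP x (rd a y) y).symm.trans e1
        exact hx.symm.trans hy
      -- surjectivity helpers
      have sur1 : ∀ u v : S, mul (rd u a) a = u →
          mul (rd (mul (rd u v) v) a) a = u := by
        intro u v hu
        rw [A4 u v a]
        exact hu
      have sur2 : ∀ u v : S, mul (rd a v) v = v →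
          mul (rd a (mul (rd u v) v)) (mul (rd u v) v) = v := by
        intro u v hv
        have h := NP a (rd u v) v
        rwa [hv] at h
      -- the key algebraic fact : P u v = u when u is in the row and v is in the row
      have puv : ∀ u v : S, mul (rd v a) a = v → mul (rd u a) a = u →
          mul (rd u v) v = u := by
        intro u v hv hu
        have h := NP u (rd v a) a
        rwa [hv, hu] at h
      refine ⟨{w : S // mul (rd w a) a = w}, {w : S // mul (rd a w) w = w},
        fun u v => ⟨mul u.1 v.1, mcl u.1 v.1 v.2⟩,
        fun u v => ⟨ld u.1 v.1, lcl u.1 v.1 v.2⟩,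
        fun u v => ⟨rd u.1 v.1, rcl u.1 v.1 v.2⟩,
        fun _ v => v, fun _ v => v, fun _ v => v,
        fun x => (⟨mul (rd x a) a, F1 x a a⟩, ⟨mul (rd a x) x, NP a (rd a x) x⟩),
        ?_, ?_, ?_, ?_, ?_, ?_, ?_, ?_, ?_, ?_, ?_, ?_⟩
      · intro x y; exact Subtype.ext (A1 x.1 y.1)
      · intro x y; exact Subtype.ext (A2 x.1 y.1)
      · intro x y
        refine Subtype.ext ?_
        show rd (mul x.1 y.1) y.1 = x.1
        rw [← A3 x.1 y.1]
        exact puv x.1 y.1 y.2 x.2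
      · intro x y; exact Subtype.ext (puv x.1 y.1 y.2 x.2)
      · intro x y; exact Subtype.ext (loopId x.1 y.1 x.2 y.2)
      · intro x y; rfl
      · intro x y; rfl
      · intro x y; rfl
      · constructor
        · intro x y h
          have h1 := congrArg (fun p => p.1.1) h
          have h2 := congrArg (fun p => p.2.1) h
          exact inj x y h1 h2
        · rintro ⟨⟨u, hu⟩, ⟨v, hv⟩⟩
          refine ⟨mul (rd u v) v, ?_⟩
          simp only [Prod.mk.injEq]
          exact ⟨Subtype.ext (sur1 u v hu), Subtype.ext (sur2 u v hv)⟩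
      · intro x y
        simp only [Prod.mk.injEq]
        exact ⟨Subtype.ext (hm1 x y), Subtype.ext (mcol x y)⟩
      · intro x y
        simp only [Prod.mk.injEq]
        exact ⟨Subtype.ext (hl1 x y), Subtype.ext (lcol x y)⟩
      · intro x y
        simp only [Prod.mk.injEq]
        exact ⟨Subtype.ext (hr1 x y), Subtype.ext (rcol x y)⟩
  · rintro ⟨Q, R, mQ, lQ, rQ, mR, lR, rR, f, _, _, _, _, h5, h6, _, _, hbij, hm, hl, _⟩
    intro x y z
    apply hbij.injective
    simp only [hm, hl, h6]
    rw [h5 (f x).1 (f y).1]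
end

section
/- Let (S; ·, \, /) be an algebra satisfying system (A). Then S satisfies the identity (x \ x)·y = y (for all x, y) if and only if S is a right product loop, i.e., there exist a loop Q (a quasigroup satisfying x \ x = y/y), a right zero semigroup R, and a bijection f : S → Q × R preserving each of the operations ·, \ and / (the product carrying componentwise operations). -/
universe u

/-- An algebra satisfying system (A) satisfies `(x\x)·y = y` iff it is a
right product loop: there exist a loop `Q` (a quasigroup with `x\x = y/y`),
a right zero semigroup `R` and an operation-preserving bijection `f : S → Q × R`. -/
theorem systemA_loopIdentity_iff_rightProductLoop {S : Type u}
    (mul ld rd : S → S → S)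
    (A1 : ∀ x y : S, ld x (mul x y) = y)
    (A2 : ∀ x y : S, mul x (ld x y) = y)
    (A3 : ∀ x y : S, mul (rd x y) y = rd (mul x y) y)
    (A4 : ∀ x y z : S, rd (mul (rd x y) y) z = rd x z)
    (A5 : ∀ x y z : S, mul (rd (mul x y) z) z = mul x (mul (rd y z) z)) :
    (∀ x y : S, mul (ld x x) y = y)
    ↔
    ∃ (Q : Type u) (R : Type u) (mQ lQ rQ : Q → Q → Q) (mR lR rR : R → R → R)
      (f : S → Q × R),
      (∀ x y, lQ x (mQ x y) = y) ∧
      (∀ x y, mQ x (lQ x y) = y) ∧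
      (∀ x y, rQ (mQ x y) y = x) ∧
      (∀ x y, mQ (rQ x y) y = x) ∧
      (∀ x y, lQ x x = rQ y y) ∧
      (∀ x y, mR x y = y) ∧ (∀ x y, lR x y = y) ∧ (∀ x y, rR x y = y) ∧
      Function.Bijective f ∧
      (∀ x y, f (mul x y) = (mQ (f x).1 (f y).1, mR (f x).2 (f y).2)) ∧
      (∀ x y, f (ld x y) = (lQ (f x).1 (f y).1, lR (f x).2 (f y).2)) ∧
      (∀ x y, f (rd x y) = (rQ (f x).1 (f y).1, rR (f x).2 (f y).2)) := by
  constructor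
  · intro L
    by_cases hS : Nonempty S
    case neg =>
      refine ⟨S, S, (fun _ y => y), (fun _ y => y), (fun _ y => y),
        (fun _ y => y), (fun _ y => y), (fun _ y => y), (fun x => (x, x)),
        ?_, ?_, ?_, ?_, ?_, ?_, ?_, ?_, ?_, ?_, ?_, ?_⟩
      case _ => intro x; exact absurd ⟨x⟩ hS
      case _ => intro x; exact absurd ⟨x⟩ hS
      case _ => intro x; exact absurd ⟨x⟩ hS
      case _ => intro x; exact absurd ⟨x⟩ hS
      case _ => intro x; exact absurd ⟨x⟩ hS
      case _ => intro x; exact absurd ⟨x⟩ hS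
      case _ => intro x; exact absurd ⟨x⟩ hS
      case _ => intro x; exact absurd ⟨x⟩ hS
      case _ =>
        exact Function.bijective_iff_has_inverse.mpr
          ⟨fun p => p.1, fun x => absurd ⟨x⟩ hS, fun p => absurd ⟨p.1⟩ hS⟩
      case _ => intro x; exact absurd ⟨x⟩ hS
      case _ => intro x; exact absurd ⟨x⟩ hS
      case _ => intro x; exact absurd ⟨x⟩ hS
    case pos =>
      obtain ⟨a⟩ := hS
      -- derived identities
      have d2 : ∀ x w z, ld x (mul (rd w z) z) = mul (rd (ld x w) z) z := by
        intro x w z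
        have h := A5 x (ld x w) z
        rw [A2] at h
        have h2 := A1 x (mul (rd (ld x w) z) z)
        rw [← h] at h2
        exact h2
      have d4 : ∀ x z, mul (rd (ld x x) z) z = rd z z := by
        intro x z
        have h := A3 (ld x x) z
        rw [L] at h
        exact h
      have d9 : ∀ x z, ld x (mul (rd x z) z) = rd z z := by
        intro x z; rw [d2 x x z, d4]
      have d10 : ∀ x z, mul x (rd z z) = mul (rd x z) z := by
        intro x z
        have h := A2 x (mul (rd x z) z)
        rw [d9] at h
        exact h
      have w2 : ∀ x y, mul (rd (rd x y) y) y = rd x y := by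
        intro x y
        have h := A3 (rd x y) y
        rw [A4] at h
        exact h
      have dw2m : ∀ x y, mul (rd x y) (rd y y) = rd x y := by
        intro x y; rw [d10]; exact w2 x y
      have d16b : ∀ y : S, ld (rd y y) (rd y y) = rd y y := by
        intro y
        have h := A1 (rd y y) (rd y y)
        rw [dw2m y y] at h
        exact h
      have d17 : ∀ y u : S, mul (rd y y) u = u := by
        intro y u
        have h := L (rd y y) u
        rwa [d16b] at h
      have d13 : ∀ z : S, mul (rd z z) z = z := fun z => d17 z z
      have d12 : ∀ z : S, ld z z = rd z z := by
        intro z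
        have h := A1 z (rd z z)
        rw [d10 z z, d13 z] at h
        exact h
      have d23 : ∀ x y z, mul (mul x y) (rd z z) = mul x (mul y (rd z z)) := by
        intro x y z
        have h := A5 x y z
        rw [← d10 (mul x y) z, ← d10 y z] at h
        exact h
      have d24 : ∀ x w z, ld x (mul w (rd z z)) = mul (ld x w) (rd z z) := by
        intro x w z
        have h := d2 x w z
        rw [← d10 w z, ← d10 (ld x w) z] at h
        exact h
      have Etrick : ∀ p y : S, mul p (rd y y) = p → ld p p = rd y y := by
        intro p y h
        have h2 := A1 p (rd y y)
        rwa [h] at h2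
      have d20 : ∀ x y, ld (mul x y) (mul x y) = ld y y := by
        intro x y
        have hm : mul (mul x y) (rd y y) = mul x y := by
          rw [d23 x y y, ← d12 y, A2]
        exact (Etrick (mul x y) y hm).trans (d12 y).symm
      have d21 : ∀ x y, ld (ld x y) (ld x y) = ld y y := by
        intro x y
        have hm : mul (ld x y) (rd y y) = ld x y := by
          rw [← d24 x y y, d10 y y, d13 y]
        exact (Etrick (ld x y) y hm).trans (d12 y).symm
      have d22 : ∀ x y, ld (rd x y) (rd x y) = ld y y := by
        intro x y
        exact (Etrick (rd x y) y (dw2m x y)).trans (d12 y).symm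
      have d29 : ∀ x z w, rd (mul x (rd z z)) w = rd x w := by
        intro x z w
        have h := A4 x z w
        rwa [← d10 x z] at h
      have d26 : ∀ x z y, mul (mul x (rd z z)) y = mul x y := by
        intro x z y
        have star : rd (mul (mul x (rd z z)) y) y = rd (mul x y) y := by
          rw [← A3, d29]
          exact A3 x y
        have h2 : mul (mul (mul x (rd z z)) y) (rd y y) = mul (mul x y) (rd y y) := by
          rw [d10 (mul (mul x (rd z z)) y) y, d10 (mul x y) y, star]
        rw [d23 (mul x (rd z z)) y y, d23 x y y, ← d12 y, A2] at h2
        exact h2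
      -- membership lemmas for the slice Q
      have mem_of_E : ∀ x : S, ld x x = rd a a → mul x (rd a a) = x := by
        intro x h
        rw [← h]
        exact A2 x x
      have E_of_mem : ∀ x : S, mul x (rd a a) = x → ld x x = rd a a :=
        fun x h => Etrick x a h
      have rdmul : ∀ u v : S, mul u (rd a a) = u → mul v (rd a a) = v →
          rd (mul u v) v = u := by
        intro u v hu hv
        have hv' : rd v v = rd a a := (d12 v).symm.trans (E_of_mem v hv)
        rw [← A3 u v, ← d10 u v, hv']
        exact hu
      have hRmul : ∀ r s : S, ld r r = r → mul r s = s := by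
        intro r s h
        have := L r s
        rwa [h] at this
      -- the data
      refine ⟨{x : S // mul x (rd a a) = x}, {x : S // ld x x = x},
        (fun u v => ⟨mul u.1 v.1, by rw [d23 u.1 v.1 a, v.2]⟩),
        (fun u v => ⟨ld u.1 v.1, by rw [← d24 u.1 v.1 a, v.2]⟩),
        (fun u v => ⟨rd u.1 v.1, mem_of_E _ ((d22 u.1 v.1).trans (E_of_mem v.1 v.2))⟩),
        (fun _ v => v), (fun _ v => v), (fun _ v => v),
        (fun x => (⟨mul x (rd a a), d26 x a (rd a a)⟩, ⟨ld x x, d21 x x⟩)),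
        ?_, ?_, ?_, ?_, ?_, ?_, ?_, ?_, ?_, ?_, ?_, ?_⟩
      · intro x y
        exact Subtype.ext (A1 x.1 y.1)
      · intro x y
        exact Subtype.ext (A2 x.1 y.1)
      · intro x y
        exact Subtype.ext (rdmul x.1 y.1 x.2 y.2)
      · intro x y
        have hyy : rd y.1 y.1 = rd a a := (d12 y.1).symm.trans (E_of_mem y.1 y.2)
        refine Subtype.ext ?_
        show mul (rd x.1 y.1) y.1 = x.1
        rw [← d10 x.1 y.1, hyy]
        exact x.2
      · intro x y
        have hyy : rd y.1 y.1 = rd a a := (d12 y.1).symm.trans (E_of_mem y.1 y.2)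
        exact Subtype.ext ((E_of_mem x.1 x.2).trans hyy.symm)
      · intro x y; rfl
      · intro x y; rfl
      · intro x y; rfl
      · -- bijectivity
        have hleft : ∀ x : S, mul (mul x (rd a a)) (ld x x) = x := by
          intro x
          rw [d26 x a (ld x x)]
          exact A2 x x
        refine Function.bijective_iff_has_inverse.mpr
          ⟨fun p => mul p.1.1 p.2.1, fun x => hleft x, ?_⟩
        rintro ⟨q, r⟩
        refine Prod.ext (Subtype.ext ?_) (Subtype.ext ?_)
        · show mul (mul q.1 r.1) (rd a a) = q.1
          rw [d23 q.1 r.1 a, hRmul r.1 (rd a a) r.2]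
          exact q.2
        · show ld (mul q.1 r.1) (mul q.1 r.1) = r.1
          exact (d20 q.1 r.1).trans r.2
      · intro x y
        refine Prod.ext (Subtype.ext ?_) (Subtype.ext ?_)
        · show mul (mul x y) (rd a a) = mul (mul x (rd a a)) (mul y (rd a a))
          exact (d23 x y a).trans (d26 x a (mul y (rd a a))).symm
        · exact d20 x y
      · intro x y
        refine Prod.ext (Subtype.ext ?_) (Subtype.ext ?_)
        · show mul (ld x y) (rd a a) = ld (mul x (rd a a)) (mul y (rd a a))
          have hld : ld (mul x (rd a a)) y = ld x y := by
            have hm : mul (mul x (rd a a)) (ld x y) = y :=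
              (d26 x a (ld x y)).trans (A2 x y)
            have h := A1 (mul x (rd a a)) (ld x y)
            rwa [hm] at h
          rw [d24 (mul x (rd a a)) y a, hld]
        · exact d21 x y
      · intro x y
        refine Prod.ext (Subtype.ext ?_) (Subtype.ext ?_)
        · show mul (rd x y) (rd a a) = rd (mul x (rd a a)) (mul y (rd a a))
          have hs : mul (mul y (rd a a)) (rd a a) = mul y (rd a a) :=
            d26 y a (rd a a)
          have hEs : rd (mul y (rd a a)) (mul y (rd a a)) = rd a a :=
            (d12 _).symm.trans (E_of_mem _ hs)
          have ht : mul (rd x (mul y (rd a a))) (rd a a) = rd x (mul y (rd a a)) :=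
            mem_of_E _ ((d22 x (mul y (rd a a))).trans (E_of_mem _ hs))
          have hq : mul (mul (rd x y) (rd a a)) (rd a a) = mul (rd x y) (rd a a) :=
            d26 (rd x y) a (rd a a)
          have hts : mul (rd x (mul y (rd a a))) (mul y (rd a a)) = mul x (rd a a) := by
            rw [← d10 x (mul y (rd a a)), hEs]
          have hqs : mul (mul (rd x y) (rd a a)) (mul y (rd a a)) = mul x (rd a a) := by
            rw [d26 (rd x y) a (mul y (rd a a)), ← d23 (rd x y) y a, ← d10 x y,
              d26 x y (rd a a)]
          have hcan : rd x (mul y (rd a a)) = mul (rd x y) (rd a a) := by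
            have h1 := rdmul (rd x (mul y (rd a a))) (mul y (rd a a)) ht hs
            have h2 := rdmul (mul (rd x y) (rd a a)) (mul y (rd a a)) hq hs
            rw [hts] at h1
            rw [hqs] at h2
            exact h1.symm.trans h2
          rw [d29 x a (mul y (rd a a)), hcan]
        · exact d22 x y
  · rintro ⟨Q, R, mQ, lQ, rQ, mR, lR, rR, f, h1, h2, h3, h4, h5, hmR, hlR, hrR,
      hbij, hfm, hfl, hfr⟩ x y
    apply hbij.1
    rw [hfm (ld x x) y, hfl x x, hmR]
    show (mQ (lQ (f x).1 (f x).1) (f y).1, (f y).2) = f y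
    rw [h5 (f x).1 (f y).1, h4]
end

section
/- An algebra (S; ·, \, /) satisfies system (A) together with the associative law x·(y·z) = (x·y)·z if and only if S is a right group: there exist a group G, a right zero semigroup R, and a bijection f : S → G × R preserving each of the operations ·, \ and /, where G is regarded as an algebra with its group multiplication, x \ y := x⁻¹·y and x/y := x·y⁻¹, and the product carries componentwise operations. -/
universe u

private theorem systemA_forward {S : Type u} (mul ld rd : S → S → S)
    (A1 : ∀ x y : S, ld x (mul x y) = y)
    (A2 : ∀ x y : S, mul x (ld x y) = y)
    (A3 : ∀ x y : S, mul (rd x y) y = rd (mul x y) y)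
    (A4 : ∀ x y z : S, rd (mul (rd x y) y) z = rd x z)
    (A5 : ∀ x y z : S, mul (rd (mul x y) z) z = mul x (mul (rd y z) z))
    (As : ∀ x y z : S, mul x (mul y z) = mul (mul x y) z)
    (a : S) :
    ∃ (G : Type u) (R : Type u) (mG : G → G → G) (invG : G → G) (eG : G)
      (mR lR rR : R → R → R) (f : S → G × R),
      (∀ x y z, mG (mG x y) z = mG x (mG y z)) ∧
      (∀ x, mG eG x = x) ∧ (∀ x, mG x eG = x) ∧
      (∀ x, mG (invG x) x = eG) ∧ (∀ x, mG x (invG x) = eG) ∧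
      (∀ x y, mR x y = y) ∧ (∀ x y, lR x y = y) ∧ (∀ x y, rR x y = y) ∧
      Function.Bijective f ∧
      (∀ x y, f (mul x y) = (mG (f x).1 (f y).1, mR (f x).2 (f y).2)) ∧
      (∀ x y, f (ld x y) = (mG (invG (f x).1) (f y).1, lR (f x).2 (f y).2)) ∧
      (∀ x y, f (rd x y) = (mG (f x).1 (invG (f y).1), rR (f x).2 (f y).2)) := by
  -- left cancellation
  have lcan : ∀ x u v : S, mul x u = mul x v → u = v := by
    intro x u v h
    have h1 := A1 x u
    rw [h, A1] at h1
    exact h1.symm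
  have u_char : ∀ x t : S, mul x t = x → ld x x = t := by
    intro x t h
    calc ld x x = ld x (mul x t) := by rw [h]
      _ = t := A1 x t
  have mul_u : ∀ x : S, mul x (ld x x) = x := fun x => A2 x x
  have u_idem : ∀ x : S, mul (ld x x) (ld x x) = ld x x := by
    intro x
    apply lcan x
    rw [As, mul_u, mul_u]
  have idem_left : ∀ t : S, mul t t = t → ∀ y, mul t y = y := by
    intro t ht y
    apply lcan t
    rw [As, ht]
  have u_mul : ∀ x y : S, ld (mul x y) (mul x y) = ld y y := by
    intro x y
    apply u_char
    rw [← As, mul_u]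
  -- a fixed idempotent
  obtain ⟨e, he⟩ : ∃ e : S, mul e e = e := ⟨ld a a, u_idem a⟩
  have hel : ∀ y, mul e y = y := idem_left e he
  have memG : ∀ x : S, mul (mul x e) e = mul x e := by
    intro x; rw [← As, he]
  have hR : ∀ g : S, mul g (mul (ld g e) e) = e := by
    intro g; rw [As, A2, he]
  have hL : ∀ g : S, mul g e = g → mul (mul (ld g e) e) g = e := by
    intro g hg
    have h2 : mul (mul (mul (ld g e) e) g) (mul (mul (ld g e) e) g)
        = mul (mul (ld g e) e) g := by
      rw [← As, As g (mul (ld g e) e) g, hR g, hel]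
    have h3 := idem_left _ h2 e
    rw [← As, hg] at h3
    exact h3
  have decomp : ∀ x : S, mul (mul x e) (ld x x) = x := by
    intro x; rw [← As, hel, mul_u]
  have hpm : ∀ x y : S, mul (mul x y) e = mul (mul x e) (mul y e) := by
    intro x y
    rw [← As x y e, ← As x e (mul y e), hel]
  have hrc : ∀ u v w : S, mul u e = u → mul v e = v → mul u w = mul v w → u = v := by
    intro u v w hu hv h
    have h' : mul u (mul w (mul (ld w e) e)) = mul v (mul w (mul (ld w e) e)) := by
      rw [As u w (mul (ld w e) e), As v w (mul (ld w e) e), h]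
    rw [hR w, hu, hv] at h'
    exact h'
  have Q1 : ∀ x y z : S, mul (rd (mul x y) z) e = mul (mul x e) (mul (rd y z) e) := by
    intro x y z
    refine hrc _ _ (mul z e) (memG _) (by rw [← As, memG]) ?_
    have h5 : mul (mul (rd (mul x y) z) z) e = mul (mul x (mul (rd y z) z)) e := by
      rw [A5]
    rw [hpm (rd (mul x y) z) z, hpm x (mul (rd y z) z), hpm (rd y z) z,
       As (mul x e) (mul (rd y z) e) (mul z e)] at h5
    exact h5
  have Q3 : ∀ x y z : S, mul (rd x z) e = mul (mul (rd x y) e) (mul (rd y z) e) := by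
    intro x y z
    have h := Q1 (rd x y) y z
    rw [A4] at h
    exact h
  have Qyy : ∀ y : S, mul (rd y y) e = e := by
    intro y
    have h := Q3 y y y
    exact (memG (rd y y)).symm.trans (idem_left _ h.symm e)
  have Q2 : ∀ x y : S, mul (mul (rd x y) e) (mul y e) = mul x e := by
    intro x y
    have h : mul (mul (rd x y) y) e = mul (rd (mul x y) y) e := by rw [A3]
    rw [hpm, Q1 x y y, Qyy, memG] at h
    exact h
  refine ⟨{g : S // mul g e = g}, {r : S // mul r r = r},
    fun g h => ⟨mul g.1 h.1, by rw [← As, h.2]⟩,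
    fun g => ⟨mul (ld g.1 e) e, memG _⟩,
    ⟨e, he⟩,
    fun _ r => r, fun _ r => r, fun _ r => r,
    fun x => (⟨mul x e, memG x⟩, ⟨ld x x, u_idem x⟩),
    fun g h k => Subtype.ext (As g.1 h.1 k.1).symm,
    fun g => Subtype.ext (hel g.1),
    fun g => Subtype.ext g.2,
    fun g => Subtype.ext (hL g.1 g.2),
    fun g => Subtype.ext (hR g.1),
    fun _ _ => rfl, fun _ _ => rfl, fun _ _ => rfl,
    ⟨?_, ?_⟩, ?_, ?_, ?_⟩
  · -- injective
    intro x y hxy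
    have h1 : mul x e = mul y e := congrArg (fun p => p.1.1) hxy
    have h2 : ld x x = ld y y := congrArg (fun p => p.2.1) hxy
    rw [← decomp x, h1, h2, decomp y]
  · -- surjective
    rintro ⟨⟨g, hg⟩, ⟨r, hr⟩⟩
    refine ⟨mul g r, ?_⟩
    have c1 : mul (mul g r) e = g := by rw [← As, idem_left r hr e, hg]
    have c2 : ld (mul g r) (mul g r) = r := by
      apply u_char
      rw [← As, hr]
    exact Prod.ext (Subtype.ext c1) (Subtype.ext c2)
  · -- mul preservation
    intro x y
    exact Prod.ext (Subtype.ext (hpm x y)) (Subtype.ext (u_mul x y))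
  · -- ld preservation
    intro x y
    refine Prod.ext (Subtype.ext ?_) (Subtype.ext ?_)
    · -- mul (ld x y) e = mul (mul (ld (mul x e) e) e) (mul y e)
      have key : mul (mul x e) (mul (ld x y) e) = mul y e := by
        rw [← As x e (mul (ld x y) e), hel, As, A2]
      show mul (ld x y) e = mul (mul (ld (mul x e) e) e) (mul y e)
      symm
      rw [← key, As, hL (mul x e) (memG x), hel]
    · -- ld (ld x y) (ld x y) = ld y y
      have h := u_mul x (ld x y)
      rw [A2] at h
      exact h.symm
  · -- rd preservation
    intro x y
    refine Prod.ext (Subtype.ext ?_) (Subtype.ext ?_)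
    · calc mul (rd x y) e = mul (mul (rd x y) e) e := (memG _).symm
        _ = mul (mul (rd x y) e) (mul (mul y e) (mul (ld (mul y e) e) e)) := by
            rw [hR (mul y e)]
        _ = mul (mul (mul (rd x y) e) (mul y e)) (mul (ld (mul y e) e) e) :=
            As _ _ _
        _ = mul (mul x e) (mul (ld (mul y e) e) e) := by rw [Q2]
    · have h1 : mul (rd (rd x y) y) y = rd x y := by
        rw [A3]; exact A4 x y y
      rw [← h1]
      exact u_mul _ y

/-- An algebra `(S; ·, \, /)` satisfies system (A) together with
associativity iff it is a right group: there exist a group `G` (given by its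
multiplication, inversion and identity), a right zero semigroup `R` and an
operation-preserving bijection `f : S → G × R`, where `G` carries `x\y = x⁻¹·y` and
`x/y = x·y⁻¹` and the product carries componentwise operations. -/
theorem systemA_assoc_iff_rightGroup {S : Type u} (mul ld rd : S → S → S) :
    ((∀ x y : S, ld x (mul x y) = y) ∧
     (∀ x y : S, mul x (ld x y) = y) ∧
     (∀ x y : S, mul (rd x y) y = rd (mul x y) y) ∧
     (∀ x y z : S, rd (mul (rd x y) y) z = rd x z) ∧
     (∀ x y z : S, mul (rd (mul x y) z) z = mul x (mul (rd y z) z)) ∧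
     (∀ x y z : S, mul x (mul y z) = mul (mul x y) z))
    ↔
    ∃ (G : Type u) (R : Type u) (mG : G → G → G) (invG : G → G) (eG : G)
      (mR lR rR : R → R → R) (f : S → G × R),
      (∀ x y z, mG (mG x y) z = mG x (mG y z)) ∧
      (∀ x, mG eG x = x) ∧ (∀ x, mG x eG = x) ∧
      (∀ x, mG (invG x) x = eG) ∧ (∀ x, mG x (invG x) = eG) ∧
      (∀ x y, mR x y = y) ∧ (∀ x y, lR x y = y) ∧ (∀ x y, rR x y = y) ∧
      Function.Bijective f ∧
      (∀ x y, f (mul x y) = (mG (f x).1 (f y).1, mR (f x).2 (f y).2)) ∧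
      (∀ x y, f (ld x y) = (mG (invG (f x).1) (f y).1, lR (f x).2 (f y).2)) ∧
      (∀ x y, f (rd x y) = (mG (f x).1 (invG (f y).1), rR (f x).2 (f y).2)) := by
  constructor
  · rintro ⟨A1, A2, A3, A4, A5, As⟩
    cases isEmpty_or_nonempty S with
    | inl hS =>
      refine ⟨PUnit.{u+1}, PEmpty.{u+1}, fun _ _ => .unit, fun _ => .unit, .unit,
        fun _ r => r, fun _ r => r, fun _ r => r, fun x => (hS.elim x),
        ?_, ?_, ?_, ?_, ?_, ?_, ?_, ?_, ⟨?_, ?_⟩, ?_, ?_, ?_⟩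
      · intros; rfl
      · intro x; rfl
      · intro x; rfl
      · intro x; rfl
      · intro x; rfl
      · intros; rfl
      · intros; rfl
      · intros; rfl
      · intro x; exact hS.elim x
      · rintro ⟨g, r⟩; exact r.elim
      · intro x; exact hS.elim x
      · intro x; exact hS.elim x
      · intro x; exact hS.elim x
    | inr hS =>
      exact systemA_forward mul ld rd A1 A2 A3 A4 A5 As (Classical.arbitrary S)
  · rintro ⟨G, R, mG, invG, eG, mR, lR, rR, f, hGa, hG1, hG2, hG3, hG4,
      hmR, hlR, hrR, hfb, hfm, hfl, hfr⟩
    have hinj := hfb.1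
    have k1 : ∀ a b, mG (invG a) (mG a b) = b := by
      intro a b; rw [← hGa, hG3, hG1]
    have k2 : ∀ a b, mG a (mG (invG a) b) = b := by
      intro a b; rw [← hGa, hG4, hG1]
    have k3 : ∀ a b, mG (mG a (invG b)) b = a := by
      intro a b; rw [hGa, hG3, hG2]
    have k4 : ∀ a b, mG (mG a b) (invG b) = a := by
      intro a b; rw [hGa, hG4, hG2]
    refine ⟨?_, ?_, ?_, ?_, ?_, ?_⟩
    · intro x y
      apply hinj
      simp only [hfl, hfm, hmR, hlR, k1, Prod.mk.eta]
    · intro x y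
      apply hinj
      simp only [hfm, hfl, hmR, hlR, k2, Prod.mk.eta]
    · intro x y
      apply hinj
      simp only [hfm, hfr, hmR, hrR, k3, k4]
    · intro x y z
      apply hinj
      simp only [hfr, hfm, hmR, hrR, k3]
    · intro x y z
      apply hinj
      simp only [hfm, hfr, hmR, hrR, k3]
    · intro x y z
      apply hinj
      simp only [hfm, hmR, hGa]
end

section
/- Let (S; ·, \, /) be an algebra satisfying system (A) in which the multiplication is commutative: x·y = y·x for all x, y. Then S is a quasigroup; in particular (x·y)/y = x and (x/y)·y = x hold for all x, y. -/
/-- An algebra satisfying system (A) with commutative multiplication is a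
quasigroup; in particular `(x·y)/y = x` and `(x/y)·y = x`. -/
theorem systemA_comm_implies_quasigroup {S : Type*} (mul ld rd : S → S → S)
    (A1 : ∀ x y : S, ld x (mul x y) = y)
    (A2 : ∀ x y : S, mul x (ld x y) = y)
    (A3 : ∀ x y : S, mul (rd x y) y = rd (mul x y) y)
    (A4 : ∀ x y z : S, rd (mul (rd x y) y) z = rd x z)
    (A5 : ∀ x y z : S, mul (rd (mul x y) z) z = mul x (mul (rd y z) z))
    (comm : ∀ x y : S, mul x y = mul y x) :
    (∀ x y : S, ld x (mul x y) = y) ∧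
    (∀ x y : S, mul x (ld x y) = y) ∧
    (∀ x y : S, rd (mul x y) y = x) ∧
    (∀ x y : S, mul (rd x y) y = x) := by
  have idem : ∀ x z : S, mul (rd (mul (rd x z) z) z) z = mul (rd x z) z := by
    intro x z; rw [A4]
  have swap : ∀ x y z : S, mul x (mul (rd y z) z) = mul y (mul (rd x z) z) := by
    intro x y z
    rw [← A5, comm x y, A5]
  have key : ∀ x z : S, mul (rd x z) z = x := by
    intro x z
    set q := mul (rd x z) z with hq
    have h1 : mul x q = mul q q := by
      have h := swap x q z
      rw [hq, idem, ← hq] at h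
      exact h
    calc q = ld q (mul q q) := (A1 q q).symm
      _ = ld q (mul q x) := by rw [← h1, comm x q]
      _ = x := A1 q x
  refine ⟨A1, A2, fun x y => ?_, key⟩
  rw [← A3]; exact key x y
end

section
/- Let (S; ·, \, /) be an algebra satisfying system (A), and let a, b ∈ S. Then the equation x·a = b has a solution x ∈ S if and only if (b/a)·a = b. -/
/-- In an algebra satisfying system (A), the equation `x·a = b` has a
solution iff `(b/a)·a = b`. -/
theorem eq_xa_b_consistent_iff {S : Type*} (mul ld rd : S → S → S)
    (A1 : ∀ x y : S, ld x (mul x y) = y)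
    (A2 : ∀ x y : S, mul x (ld x y) = y)
    (A3 : ∀ x y : S, mul (rd x y) y = rd (mul x y) y)
    (A4 : ∀ x y z : S, rd (mul (rd x y) y) z = rd x z)
    (A5 : ∀ x y z : S, mul (rd (mul x y) z) z = mul x (mul (rd y z) z))
    (a b : S) :
    (∃ x : S, mul x a = b) ↔ mul (rd b a) a = b := by
  -- key lemma: (z/z)·z = z
  have hf : ∀ z : S, mul (rd z z) z = z := by
    intro z
    have h1 : mul (rd z z) z = mul (rd z z) (mul (rd z z) z) := by
      have h := A5 (rd z z) z z
      rwa [A4 z z z] at h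
    have h2 := A1 (rd z z) (mul (rd z z) z)
    rw [← h1] at h2
    rw [← h2, A1]
  constructor
  · rintro ⟨x, rfl⟩
    have h := A5 x a a
    rw [hf a] at h
    exact h
  · intro h
    exact ⟨rd b a, h⟩
end

section
/- Let (S; ·, \, /) be an algebra satisfying system (A) together with the identity (x/x)·y = y (i.e., S is a right product left loop), and let a, b ∈ S. Then the equation x·a = b has a solution x ∈ S if and only if a/a = b/b. -/
/-- In an algebra satisfying system (A) together with `(x/x)·y = y`
(a right product left loop), the equation `x·a = b` has a solution iff `a/a = b/b`. -/
theorem eq_xa_b_consistent_iff_leftLoop {S : Type*} (mul ld rd : S → S → S)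
    (A1 : ∀ x y : S, ld x (mul x y) = y)
    (A2 : ∀ x y : S, mul x (ld x y) = y)
    (A3 : ∀ x y : S, mul (rd x y) y = rd (mul x y) y)
    (A4 : ∀ x y z : S, rd (mul (rd x y) y) z = rd x z)
    (A5 : ∀ x y z : S, mul (rd (mul x y) z) z = mul x (mul (rd y z) z))
    (LL : ∀ x y : S, mul (rd x x) y = y)
    (a b : S) :
    (∃ x : S, mul x a = b) ↔ rd a a = rd b b := by
  -- D1 : products `x·y` are `y`-stable
  have D1 : ∀ x y : S, mul (rd (mul x y) y) y = mul x y := by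
    intro x y; rw [A5, LL]
  -- S2 : `z/z` is `z`-stable
  have S2 : ∀ z : S, mul (rd (rd z z) z) z = rd z z := by
    intro z; rw [A3, LL]
  -- A4' : ((x·y)/y)/z = x/z
  have A4' : ∀ x y z : S, rd (rd (mul x y) y) z = rd x z := by
    intro x y z
    have h := A4 x y z
    rwa [A3] at h
  -- L1 : (y/y)/z does not depend on y
  have L1 : ∀ w y z : S, rd (rd y y) z = rd (rd w w) z := by
    intro w y z
    have h := A4' (rd w w) y z
    rwa [LL] at h
  -- S1 : left multiplication preserves `z`-stability
  have S1 : ∀ p q z : S, mul (rd q z) z = q → mul (rd (mul p q) z) z = mul p q := by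
    intro p q z h; rw [A5, h]
  -- I1 : projection onto `x·y`-stable elements equals projection onto `y`-stable elements
  have I1 : ∀ t x y : S, mul (rd t (mul x y)) (mul x y) = mul (rd t y) y := by
    intro t x y
    have hc := S1 (rd t (mul x y)) (mul x y) y (D1 x y)
    rw [A4] at hc
    exact hc.symm
  -- I2 : projection onto `z/z`-stable elements equals projection onto `z`-stable elements
  have I2 : ∀ t z : S, mul (rd t (rd z z)) (rd z z) = mul (rd t z) z := by
    intro t z
    have hc := S1 (rd t (rd z z)) (rd z z) z (S2 z)
    rw [A4] at hc
    exact hc.symm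
  constructor
  · rintro ⟨x, hx⟩
    have h1 : mul (rd (rd a a) (mul x a)) (mul x a) = rd (mul x a) (mul x a) := by
      rw [L1 (mul x a) a (mul x a)]
      exact S2 (mul x a)
    have h2 : mul (rd (rd a a) (mul x a)) (mul x a) = rd a a := by
      rw [I1 (rd a a) x a]
      exact S2 a
    have h3 : rd (mul x a) (mul x a) = rd a a := h1.symm.trans h2
    rw [hx] at h3
    exact h3.symm
  · intro h
    refine ⟨rd b a, ?_⟩
    have h1 := (I2 b a).symm
    rw [h] at h1
    rw [h1, I2 b b, LL]
end

section
/- Let (S; ·, \, /) be an algebra satisfying system (A) together with the identity (x \ x)·z = (y \ y)·z (i.e., S is a right product right loop), and let a, b ∈ S. Then the equation x·a = b has a solution x ∈ S if and only if a \ a = b \ b. -/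
/-- In an algebra satisfying system (A) together with
`(x\x)·z = (y\y)·z` (a right product right loop), the equation `x·a = b` has a
solution iff `a\a = b\b`. -/
theorem eq_xa_b_consistent_iff_rightLoop {S : Type*} (mul ld rd : S → S → S)
    (A1 : ∀ x y : S, ld x (mul x y) = y)
    (A2 : ∀ x y : S, mul x (ld x y) = y)
    (A3 : ∀ x y : S, mul (rd x y) y = rd (mul x y) y)
    (A4 : ∀ x y z : S, rd (mul (rd x y) y) z = rd x z)
    (A5 : ∀ x y z : S, mul (rd (mul x y) z) z = mul x (mul (rd y z) z))
    (RL : ∀ x y z : S, mul (ld x x) z = mul (ld y y) z)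
    (a b : S) :
    (∃ x : S, mul x a = b) ↔ ld a a = ld b b := by
  -- Lemma Q : (a/a)·a = a
  have Q : ∀ a : S, mul (rd a a) a = a := by
    intro a
    have h2 : mul (rd (mul (rd a a) a) a) a
        = mul (rd a a) (mul (rd a a) a) := A5 (rd a a) a a
    rw [A4] at h2
    -- h2 : mul (rd a a) a = mul (rd a a) (mul (rd a a) a)
    have h3 := congrArg (ld (rd a a)) h2
    rw [A1, A1] at h3
    exact h3.symm
  -- products are fixed by the projection P_z
  have Pfix : ∀ g z : S, mul (rd (mul g z) z) z = mul g z := by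
    intro g z; rw [A5, Q]
  -- left division commutes with the projection P_z
  have comm : ∀ x w z : S,
      mul (rd (ld x w) z) z = ld x (mul (rd w z) z) := by
    intro x w z
    have h := A5 x (ld x w) z
    rw [A2] at h
    -- h : mul (rd w z) z = mul x (mul (rd (ld x w) z) z)
    have h2 := congrArg (ld x) h
    rw [A1] at h2
    exact h2.symm
  -- if s is P_z-fixed, so is s\s
  have K1 : ∀ s z : S, mul (rd s z) z = s →
      mul (rd (ld s s) z) z = ld s s := by
    intro s z hs
    rw [comm s s z, hs]
  -- key lemma : (g·z)\(g·z) = z\z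
  have E : ∀ g z : S, ld (mul g z) (mul g z) = ld z z := by
    intro g z
    have hz : mul (rd (ld z z) z) z = ld z z := K1 z z (Q z)
    have hs : mul (rd (ld (mul g z) (mul g z)) z) z
        = ld (mul g z) (mul g z) := K1 (mul g z) z (Pfix g z)
    have h3 : mul (ld z z) z = mul (ld (mul g z) (mul g z)) z :=
      RL z (mul g z) z
    calc ld (mul g z) (mul g z)
        = mul (rd (ld (mul g z) (mul g z)) z) z := hs.symm
      _ = rd (mul (ld (mul g z) (mul g z)) z) z := A3 _ _
      _ = rd (mul (ld z z) z) z := by rw [h3]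
      _ = mul (rd (ld z z) z) z := (A3 _ _).symm
      _ = ld z z := hz
  constructor
  · rintro ⟨x, hx⟩
    rw [← hx]
    exact (E x a).symm
  · intro h
    refine ⟨rd b a, ?_⟩
    have hb : mul b (ld a a) = b := by rw [h]; exact A2 b b
    calc mul (rd b a) a
        = mul (rd (mul b (ld a a)) a) a := by rw [hb]
      _ = mul b (mul (rd (ld a a) a) a) := A5 _ _ _
      _ = mul b (ld a a) := by rw [K1 a a (Q a)]
      _ = b := hb
end

section
/- Let (S; ·, \, /) be an algebra satisfying system (A), let a, b ∈ S, and suppose the equation x·a = b is consistent, i.e., (b/a)·a = b. Define F : S → S by F(x) := ((b/a)·x)/x. Then: (i) F(F(x)) = F(x) for all x ∈ S (the equation x = F(x) is reproductive); (ii) for every p ∈ S, F(p)·a = b; and (iii) every x ∈ S with x·a = b satisfies x = F(x). In particular the solution set of x·a = b is exactly { ((b/a)·p)/p : p ∈ S }. -/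
/-- In an algebra satisfying system (A), if `x·a = b` is consistent,
i.e. `(b/a)·a = b`, then `F(x) := ((b/a)·x)/x` satisfies: (i) `F(F(x)) = F(x)` for all
`x` (reproductivity); (ii) `F(p)·a = b` for every `p`; (iii) every solution `x` of
`x·a = b` satisfies `x = F(x)`. In particular the solution set of `x·a = b` is exactly
`{ ((b/a)·p)/p : p ∈ S }`. -/
theorem reproductive_solution {S : Type*} (mul ld rd : S → S → S)
    (A1 : ∀ x y : S, ld x (mul x y) = y)
    (A2 : ∀ x y : S, mul x (ld x y) = y)
    (A3 : ∀ x y : S, mul (rd x y) y = rd (mul x y) y)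
    (A4 : ∀ x y z : S, rd (mul (rd x y) y) z = rd x z)
    (A5 : ∀ x y z : S, mul (rd (mul x y) z) z = mul x (mul (rd y z) z))
    (a b : S) (consistent : mul (rd b a) a = b)
    (F : S → S) (hF : ∀ x, F x = rd (mul (rd b a) x) x) :
    (∀ x : S, F (F x) = F x) ∧
    (∀ p : S, mul (F p) a = b) ∧
    (∀ x : S, mul x a = b → x = F x) ∧
    {x : S | mul x a = b} = {x : S | ∃ p : S, x = rd (mul (rd b a) p) p} := by
  -- Left cancellation from A1.
  have cancel : ∀ u v w : S, mul u v = mul u w → v = w := by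
    intro u v w h
    have := congrArg (ld u) h
    rwa [A1, A1] at this
  -- Key lemma L : (x/x)·x = x.
  have L : ∀ x : S, mul (rd x x) x = x := by
    intro x
    set u := mul (rd x x) x with hu
    -- u/x = x/x
    have h1 : rd u x = rd x x := A4 x x x
    -- (u·x)/x = u
    have h2 : rd (mul u x) x = u := by
      rw [← A3, h1, ← hu]
    -- u·u = u·x
    have h3 : mul u u = mul u x := by
      have h5 := A5 u x x
      rw [h2] at h5
      rw [hu] at h5 ⊢
      exact h5.symm
    exact cancel u u x h3
  set c := rd b a with hc
  -- (ii) : ∀ p, F p · a = b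
  have part2 : ∀ p : S, mul (F p) a = b := by
    intro p
    -- F p / a = c / a
    have hFa : rd (F p) a = rd c a := by
      rw [hF, ← A3, A4]
    -- (F p · a)/a = c
    have h1 : rd (mul (F p) a) a = c := by
      rw [← A3, hFa, A3, consistent]
    -- ((F p · a)/a)·a = F p · a  via A5 and L
    have h2 : mul (rd (mul (F p) a) a) a = mul (F p) a := by
      have h5 := A5 (F p) a a
      rw [L a] at h5
      exact h5
    rw [h1] at h2
    rw [← h2, consistent]
  -- (iii)
  have part3 : ∀ x : S, mul x a = b → x = F x := by
    intro x hx
    -- c = ((x/a)·a)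
    have hc2 : c = mul (rd x a) a := by
      rw [hc, ← hx, ← A3]
    have h1 : rd c x = rd x x := by
      rw [hc2, A4]
    rw [hF, ← A3, h1, L]
  -- (i)
  have part1 : ∀ x : S, F (F x) = F x := fun x => (part3 (F x) (part2 x)).symm
  refine ⟨part1, part2, part3, ?_⟩
  ext x
  simp only [Set.mem_setOf_eq]
  constructor
  · intro hx
    exact ⟨x, by rw [← hF]; exact part3 x hx⟩
  · rintro ⟨p, rfl⟩
    rw [← hF]
    exact part2 p
end

section
/- Let (S; ·, \, /) be an algebra satisfying system (A) together with the identity (x \ x)·z = (y \ y)·z (i.e., S is a right product right loop), and let a, b ∈ S with a \ a = b \ b. Then for every idempotent e ∈ S (i.e., e·e = e) the element (b/a)·e satisfies ((b/a)·e)·a = b, and conversely every x ∈ S with x·a = b is of the form x = (b/a)·e for some idempotent e ∈ S. -/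
/-- In an algebra satisfying system (A) together with
`(x\x)·z = (y\y)·z` (a right product right loop), if `a\a = b\b`, then for every
idempotent `e` the element `(b/a)·e` solves `x·a = b`, and conversely every solution
of `x·a = b` has the form `(b/a)·e` for some idempotent `e`. -/
theorem rightLoop_solutions_via_idempotents {S : Type*} (mul ld rd : S → S → S)
    (A1 : ∀ x y : S, ld x (mul x y) = y)
    (A2 : ∀ x y : S, mul x (ld x y) = y)
    (A3 : ∀ x y : S, mul (rd x y) y = rd (mul x y) y)
    (A4 : ∀ x y z : S, rd (mul (rd x y) y) z = rd x z)
    (A5 : ∀ x y z : S, mul (rd (mul x y) z) z = mul x (mul (rd y z) z))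
    (RL : ∀ x y z : S, mul (ld x x) z = mul (ld y y) z)
    (a b : S) (hab : ld a a = ld b b) :
    (∀ e : S, mul e e = e → mul (mul (rd b a) e) a = b) ∧
    (∀ x : S, mul x a = b → ∃ e : S, mul e e = e ∧ x = mul (rd b a) e) := by
  -- N : (y/y)·y = y
  have N : ∀ y : S, mul (rd y y) y = y := by
    intro y
    have h5 := A5 (rd y y) y y
    rw [A4 y y y] at h5
    calc mul (rd y y) y
        = ld (rd y y) (mul (rd y y) (mul (rd y y) y)) := (A1 _ _).symm
      _ = ld (rd y y) (mul (rd y y) y) := by rw [← h5]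
      _ = y := A1 _ _
  -- I3 : ((y\y)/y)·y = y\y
  have I3 : ∀ y : S, mul (rd (ld y y) y) y = ld y y := by
    intro y
    have h := A5 y (ld y y) y
    rw [A2 y y, N y] at h
    calc mul (rd (ld y y) y) y
        = ld y (mul y (mul (rd (ld y y) y) y)) := (A1 _ _).symm
      _ = ld y y := by rw [← h]
  -- L2 : ((u\u)/y)·y = y\y
  have L2 : ∀ u y : S, mul (rd (ld u u) y) y = ld y y := by
    intro u y
    calc mul (rd (ld u u) y) y
        = rd (mul (ld u u) y) y := A3 _ _
      _ = rd (mul (ld y y) y) y := by rw [RL u y y]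
      _ = mul (rd (ld y y) y) y := (A3 _ _).symm
      _ = ld y y := I3 y
  -- P11 : ((c/y)·y)·y = c·y
  have P11 : ∀ c y : S, mul (mul (rd c y) y) y = mul c y := by
    intro c y
    rw [A3 c y, A5 c y y, N y]
  -- P1' : ((x/z)·z)·y = x·y
  have P1' : ∀ x z y : S, mul (mul (rd x z) z) y = mul x y := by
    intro x z y
    have h1 := P11 (mul (rd x z) z) y
    rw [A4 x z y] at h1
    rw [← h1]
    exact P11 x y
  -- P12 : x\x is idempotent
  have P12 : ∀ x : S, mul (ld x x) (ld x x) = ld x x := by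
    intro x
    have h := L2 x (ld x x)
    rw [N (ld x x)] at h
    have h2 := A2 (ld x x) (ld x x)
    rw [← h] at h2
    exact h2
  -- P5 : (b/a)·a = b
  have P5 : mul (rd b a) a = b := by
    have hb : mul b (ld a a) = b := by rw [hab]; exact A2 b b
    have h := A5 b (ld a a) a
    rw [hb, I3 a, hb] at h
    exact h
  constructor
  · intro e he
    have he' : ld e e = e := by
      have h := A1 e e
      rwa [he] at h
    have L5 : mul (mul (rd (rd b a) e) e) a = mul (mul (rd b a) e) a := by
      have h := A5 (rd b a) (ld (rd b a) (rd b a)) e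
      rw [A2 (rd b a) (rd b a), L2 (rd b a) e, he'] at h
      rw [h]
    rw [← L5, P1' (rd b a) e a, P5]
  · intro x hxa
    refine ⟨ld x x, P12 x, ?_⟩
    have hq : rd b a = mul (rd x a) a := by
      rw [← hxa, ← A3 x a]
    rw [hq, P1' x a (ld x x), A2 x x]
end

section
/- Let (S; ·, \, /) be an algebra satisfying system (A) together with the identity (x/x)·y = y (i.e., S is a right product left loop). Let a₁, …, aₙ (n ≥ 1) be elements of S, and let b₁, …, bₘ be the subsequence of a₁, …, a_{n−1} consisting of those entries that are NOT idempotent (aᵢ·aᵢ ≠ aᵢ). Then the right-associated product ϱ(a₁, …, aₙ) = a₁·(a₂·(⋯·(a_{n−1}·aₙ))) equals the right-associated product ϱ(b₁, …, bₘ, aₙ). -/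
/-- The right-associated product `ϱ(a₁, …, aₙ)` of the nonempty sequence
`a₁, …, a_{n-1}, aₙ` encoded as the list `[a₁, …, a_{n-1}]` together with the last
element `aₙ`: `rprod mul [] a = a` and `rprod mul (x :: l) a = x · rprod mul l a`. -/
def rprod {S : Type*} (mul : S → S → S) : List S → S → S
  | [], a => a
  | x :: l, a => mul x (rprod mul l a)

open scoped Classical in
/-- In an algebra satisfying system (A) together with `(x/x)·y = y`
(a right product left loop), the right-associated product of `a₁, …, aₙ` equals the
right-associated product of the non-idempotent entries among `a₁, …, a_{n-1}`
followed by `aₙ`. -/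
theorem rprod_filter_idempotents {S : Type*} (mul ld rd : S → S → S)
    (A1 : ∀ x y : S, ld x (mul x y) = y)
    (A2 : ∀ x y : S, mul x (ld x y) = y)
    (A3 : ∀ x y : S, mul (rd x y) y = rd (mul x y) y)
    (A4 : ∀ x y z : S, rd (mul (rd x y) y) z = rd x z)
    (A5 : ∀ x y z : S, mul (rd (mul x y) z) z = mul x (mul (rd y z) z))
    (LL : ∀ x y : S, mul (rd x x) y = y)
    (l : List S) (a : S) :
    rprod mul l a = rprod mul (l.filter fun x => decide (mul x x ≠ x)) a := by
  have key : ∀ e y : S, mul e e = e → mul e y = y := by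
    intro e y he
    have h1 : mul (rd e e) e = rd e e := by
      have h := A3 e e; rwa [he] at h
    have h3 : rd e e = e := h1 ▸ LL e e
    have h := LL e y; rwa [h3] at h
  induction l with
  | nil => rfl
  | cons x l ih =>
    simp only [rprod, List.filter_cons]
    by_cases h : mul x x = x
    · simp only [h, ne_eq, not_true_eq_false, decide_eq_false, Bool.false_eq_true,
        if_false, key x _ h]
      exact ih
    · simp only [ne_eq, h, not_false_eq_true, decide_eq_true_eq, if_true, rprod, ih]
end

section
/- Axiom (A5) is independent of (A1)–(A4): there exists an algebra (S; ·, \, /) on a two-element set — for instance S = Bool with x·y = x \ y = x/y = ¬y (i.e., s∘0 = 1 and s∘1 = 0 for each of the three operations) — which satisfies (A1) x \ (x·y) = y, (A2) x·(x \ y) = y, (A3) (x/y)·y = (x·y)/y, and (A4) ((x/y)·y)/z = x/z for all x, y, z, but does not satisfy (A5): there exist x, y, z with ((x·y)/z)·z ≠ x·((y/z)·z). -/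
/-- The two-element model: all three operations are `(x, y) ↦ ¬y` on `Bool`. -/
def negOp : Bool → Bool → Bool := fun _ y => !y

/-- Axiom (A5) is independent of (A1)–(A4): the algebra on `Bool` whose
three operations `·`, `\`, `/` are all `(x, y) ↦ ¬y` satisfies (A1)–(A4) but not (A5). -/
theorem A5_independent :
    (∀ x y : Bool, negOp x (negOp x y) = y) ∧
    (∀ x y : Bool, negOp x (negOp x y) = y) ∧
    (∀ x y : Bool, negOp (negOp x y) y = negOp (negOp x y) y) ∧
    (∀ x y z : Bool, negOp (negOp (negOp x y) y) z = negOp x z) ∧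
    (∃ x y z : Bool, negOp (negOp (negOp x y) z) z ≠ negOp x (negOp (negOp y z) z)) := by
  refine ⟨by decide, by decide, by decide, by decide, ⟨true, true, false, by decide⟩⟩
end
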